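/- arXiv:2003.13829 — 7 statements merged into one kernel-verified Lean document; each statement's English description precedes it below -/
import Mathlib

section
/- Every lattice Λ in ℝ² with covolume strictly less than √3/2 contains a nonzero point of the open unit disc D = {(x,y) : x² + y² < 1}. Equivalently, Δ(D) = √3/2 (together with the admissibility of the hexagonal lattice of covolume √3/2). -/
open MeasureTheory
open scoped ENNReal

noncomputable section

/-- The lattice `g ℤ²` in `ℝ²`. -/
def lattice2 (g : Matrix (Fin 2) (Fin 2) ℝ) : Set (Fin 2 → ℝ) :=
  {x | ∃ m : Fin 2 → ℤ, x = g.mulVec (fun i => (m i : ℝ))}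

/-- `K`-admissibility: the lattice meets `K` only at the origin. -/
def Admissible2 (K : Set (Fin 2 → ℝ)) (g : Matrix (Fin 2) (Fin 2) ℝ) : Prop :=
  lattice2 g ∩ K = {0}

/-- The critical determinant `Δ(K)`. -/
def critDet2 (K : Set (Fin 2 → ℝ)) : ℝ :=
  sInf {d | ∃ g : Matrix (Fin 2) (Fin 2) ℝ, g.det ≠ 0 ∧ Admissible2 K g ∧ d = |g.det|}

/-- The critical locus `𝓛(K)`: the set of `K`-admissible lattices of covolume `Δ(K)`. -/
def critLocus2 (K : Set (Fin 2 → ℝ)) : Set (Set (Fin 2 → ℝ)) :=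
  {L | ∃ g : Matrix (Fin 2) (Fin 2) ℝ, g.det ≠ 0 ∧ L = lattice2 g ∧ Admissible2 K g ∧
    |g.det| = critDet2 K}

/-- The open unit disc in `ℝ²`. -/
def unitDisc : Set (Fin 2 → ℝ) := {x | x 0 ^ 2 + x 1 ^ 2 < 1}

/-- The open unit square `(-1,1)²`. -/
def openSquare : Set (Fin 2 → ℝ) := {x | |x 0| < 1 ∧ |x 1| < 1}

/-- A matrix generating the hexagonal lattice `ℤ·(1,0) + ℤ·(1/2,√3/2)`. -/
def hexMat : Matrix (Fin 2) (Fin 2) ℝ := !![1, 1/2; 0, Real.sqrt 3 / 2]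



private lemma quad_bound (t d p : ℝ) (ht1 : 1 ≤ t) (ht2 : t < 2 * d)
    (hd2 : d ^ 2 < 3 / 4) (hp2 : p ^ 2 ≤ t ^ 2 / 4) : p ^ 2 + d ^ 2 < t := by
  have hd1 : d < 1 := by nlinarith [sq_nonneg (d - 1)]
  nlinarith [mul_nonneg (by linarith : (0:ℝ) ≤ t - 1) (by linarith : (0:ℝ) ≤ 2*d - t),
    mul_nonneg (by linarith : (0:ℝ) ≤ t - 1) (by linarith : (0:ℝ) ≤ 3 - 2*d)]

private lemma key_real (u0 u1 v0 v1 d : ℝ) (hd3 : d < Real.sqrt 3 / 2) (hd0 : 0 < d)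
    (ht1 : 1 ≤ u0^2 + u1^2) (ht2 : u0^2 + u1^2 < 2 * d)
    (hcross : |u0 * v1 - u1 * v0| = d) :
    ∃ n : ℤ, ((v0 - n * u0)^2 + (v1 - n * u1)^2 < 1) ∧
      (u0 * (v1 - n * u1) - u1 * (v0 - n * u0) ≠ 0) := by
  have ht0 : (0:ℝ) < u0^2 + u1^2 := lt_of_lt_of_le one_pos ht1
  obtain ⟨n, hn⟩ : ∃ n : ℤ, |(u0 * v0 + u1 * v1) - n * (u0^2 + u1^2)| ≤ (u0^2 + u1^2) / 2 := by
    refine ⟨round ((u0 * v0 + u1 * v1) / (u0^2 + u1^2)), ?_⟩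
    have hrd : |(u0 * v0 + u1 * v1) / (u0^2 + u1^2)
        - round ((u0 * v0 + u1 * v1) / (u0^2 + u1^2))| ≤ 1 / 2 := abs_sub_round _
    set c := ((u0 * v0 + u1 * v1) / (u0^2 + u1^2)) with hc
    have hs : u0 * v0 + u1 * v1 = c * (u0^2 + u1^2) := by
      rw [hc]; field_simp
    rw [hs]
    have : c * (u0^2+u1^2) - (round c : ℝ) * (u0^2+u1^2) = (c - round c) * (u0^2+u1^2) := by ring
    rw [this, abs_mul, abs_of_pos ht0]
    nlinarith [abs_nonneg (c - (round c : ℝ))]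
  refine ⟨n, ?_, ?_⟩
  · have hd2 : d ^ 2 < 3 / 4 := by
      have h3 : (Real.sqrt 3 / 2)^2 = 3 / 4 := by
        rw [div_pow, Real.sq_sqrt (by norm_num : (0:ℝ) ≤ 3)]; norm_num
      nlinarith
    have hp2 : ((u0 * v0 + u1 * v1) - n * (u0^2 + u1^2)) ^ 2 ≤ (u0^2 + u1^2) ^ 2 / 4 := by
      obtain ⟨h1, h2⟩ := abs_le.mp hn
      nlinarith
    have hq := quad_bound (u0^2+u1^2) d ((u0 * v0 + u1 * v1) - n * (u0^2 + u1^2)) ht1 ht2 hd2 hp2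
    have hlag : ((v0 - n * u0)^2 + (v1 - n * u1)^2) * (u0^2 + u1^2)
        = ((u0 * v0 + u1 * v1) - n * (u0^2 + u1^2))^2 + (u0 * v1 - u1 * v0)^2 := by ring
    have hcd : (u0 * v1 - u1 * v0)^2 = d^2 := by rw [← hcross, sq_abs]
    rw [← mul_lt_mul_iff_left₀ ht0, hlag, hcd, one_mul]
    exact hq
  · intro h0
    have he : u0 * (v1 - n * u1) - u1 * (v0 - n * u0) = u0 * v1 - u1 * v0 := by ring
    rw [he] at h0
    rw [h0, abs_zero] at hcross
    exact hd0.ne hcross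

private lemma cross_mulVec (g : Matrix (Fin 2) (Fin 2) ℝ) (p q : Fin 2 → ℝ) :
    g.mulVec p 0 * g.mulVec q 1 - g.mulVec p 1 * g.mulVec q 0
      = g.det * (p 0 * q 1 - p 1 * q 0) := by
  simp only [Matrix.mulVec, dotProduct, Matrix.det_fin_two, Fin.sum_univ_two]
  ring


private lemma minkowski_disc (g : Matrix (Fin 2) (Fin 2) ℝ) (hg : g.det ≠ 0) :
    ∃ x ∈ lattice2 g, x ≠ 0 ∧ x 0 ^ 2 + x 1 ^ 2 < 2 * |g.det| := by
  set d := |g.det| with hdd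
  have hd0 : 0 < d := abs_pos.mpr hg
  have hinv : Invertible g := g.invertibleOfIsUnitDet (isUnit_iff_ne_zero.mpr hg)
  set b : Module.Basis (Fin 2) ℝ (Fin 2 → ℝ) :=
    (Pi.basisFun ℝ (Fin 2)).map (g.toLinearEquiv' hinv) with hb
  have hbval : ∀ i j, b i j = g j i := by
    intro i j
    fin_cases i <;> fin_cases j <;>
      simp [hb, Matrix.toLinearEquiv', Matrix.mulVec, dotProduct, Fin.sum_univ_two]
  have hspan : ∀ x : Fin 2 → ℝ, x ∈ Submodule.span ℤ (Set.range b) ↔ x ∈ lattice2 g := by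
    intro x
    rw [Submodule.mem_span_range_iff_exists_fun]
    constructor
    · rintro ⟨c, hc⟩
      refine ⟨c, ?_⟩
      rw [← hc]
      funext j
      simp only [Finset.sum_apply, Fin.sum_univ_two, Pi.smul_apply, hbval]
      simp only [zsmul_eq_mul, Matrix.mulVec, dotProduct, Fin.sum_univ_two]
      push_cast
      ring
    · rintro ⟨m, hm⟩
      refine ⟨m, ?_⟩
      rw [hm]
      funext j
      simp only [Finset.sum_apply, Fin.sum_univ_two, Pi.smul_apply, hbval]
      simp only [zsmul_eq_mul, Matrix.mulVec, dotProduct, Fin.sum_univ_two]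
      push_cast
      ring
  -- fundamental domain volume
  have hvolF : volume (ZSpan.fundamentalDomain b) = ENNReal.ofReal d := by
    rw [ZSpan.volume_fundamentalDomain]
    congr 1
    have : (Matrix.of ⇑b) = g.transpose := by
      ext i j
      exact hbval i j
    rw [this, Matrix.det_transpose]
  -- the disc
  set s : Set (Fin 2 → ℝ) := {x | x 0 ^ 2 + x 1 ^ 2 < 2 * d} with hs
  have hsymm : ∀ x ∈ s, -x ∈ s := by
    intro x hx
    simpa [hs] using hx
  set r : ℝ := Real.sqrt (2 * d) with hr
  have hr0 : 0 < r := Real.sqrt_pos.mpr (by linarith)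
  have hpre : ∀ y : EuclideanSpace ℝ (Fin 2),
      y ∈ (⇑(MeasurableEquiv.toLp 2 (Fin 2 → ℝ)).symm ⁻¹' s) ↔ y ∈ Metric.ball (0 : EuclideanSpace ℝ (Fin 2)) r := by
    intro y
    rw [Metric.mem_ball, dist_zero_right, EuclideanSpace.norm_eq]
    simp only [Set.mem_preimage, hs, Set.mem_setOf_eq]
    rw [hr, Real.sqrt_lt_sqrt_iff (by positivity)]
    constructor
    · intro h
      convert h using 2
      · simp [Fin.sum_univ_two, sq_abs]
    · intro h
      convert h using 2
      simp [Fin.sum_univ_two, sq_abs]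
  have hmeas : MeasurableSet s := by
    have : s = (fun x : Fin 2 → ℝ => x 0 ^ 2 + x 1 ^ 2) ⁻¹' (Set.Iio (2 * d)) := rfl
    rw [this]
    exact ((((measurable_pi_apply 0).pow_const 2).add
      ((measurable_pi_apply 1).pow_const 2))) measurableSet_Iio
  have hvols : volume s = ENNReal.ofReal (2 * d * Real.pi) := by
    have hmp := (EuclideanSpace.volume_preserving_symm_measurableEquiv_toLp (Fin 2)).measure_preimage
      hmeas.nullMeasurableSet
    have hball : (⇑(MeasurableEquiv.toLp 2 (Fin 2 → ℝ)).symm ⁻¹' s)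
        = Metric.ball (0 : EuclideanSpace ℝ (Fin 2)) r := Set.ext hpre
    rw [← hmp, hball, EuclideanSpace.volume_ball]
    simp only [Fintype.card_fin]
    rw [show ((2:ℕ) : ℝ) / 2 + 1 = 2 by norm_num, Real.Gamma_two]
    rw [div_one, Real.sq_sqrt Real.pi_nonneg, ← ENNReal.ofReal_pow hr0.le,
      ← ENNReal.ofReal_mul (by positivity), hr, Real.sq_sqrt (by linarith : (0:ℝ) ≤ 2 * d)]
  -- apply Minkowski
  haveI : Countable (Submodule.span ℤ (Set.range ⇑b)).toAddSubgroup :=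
    inferInstanceAs (Countable (Submodule.span ℤ (Set.range ⇑b)))
  have hfund := ZSpan.isAddFundamentalDomain' b volume
  have hcvx : Convex ℝ s := by
    have : s = (WithLp.linearEquiv 2 ℝ (Fin 2 → ℝ)).symm ⁻¹'
        (Metric.ball (0 : EuclideanSpace ℝ (Fin 2)) r) := by
      ext x
      exact (hpre (WithLp.toLp 2 x))
    rw [this]
    exact (convex_ball _ _).linear_preimage _
  have hlt : volume (ZSpan.fundamentalDomain b) * 2 ^ (Module.finrank ℝ (Fin 2 → ℝ)) < volume s := by
    rw [hvolF, hvols]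
    have hfr : Module.finrank ℝ (Fin 2 → ℝ) = 2 := by simp
    rw [hfr, show ((2:ℝ≥0∞)^2) = ENNReal.ofReal 4 by norm_num,
      ← ENNReal.ofReal_mul hd0.le]
    apply ENNReal.ofReal_lt_ofReal_iff_of_nonneg (by positivity) |>.mpr
    nlinarith [Real.pi_gt_three]
  obtain ⟨x, hx0, hxs⟩ := exists_ne_zero_mem_lattice_of_measure_mul_two_pow_lt_measure
    hfund hsymm hcvx hlt
  refine ⟨(x : Fin 2 → ℝ), (hspan _).mp x.2, ?_, hxs⟩
  intro h
  apply hx0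
  ext
  rw [h]
  rfl


private lemma disc_point (g : Matrix (Fin 2) (Fin 2) ℝ) (hg : g.det ≠ 0)
    (hlt : |g.det| < Real.sqrt 3 / 2) :
    ∃ x ∈ lattice2 g ∩ unitDisc, x ≠ 0 := by
  by_contra hcon
  push_neg at hcon
  set d := |g.det| with hdd
  have hd0 : 0 < d := abs_pos.mpr hg
  have H1 : ∀ y ∈ lattice2 g, y ≠ 0 → 1 ≤ y 0 ^ 2 + y 1 ^ 2 := by
    intro y hy hy0
    by_contra h
    push_neg at h
    exact hy0 (hcon y ⟨hy, h⟩)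
  obtain ⟨u, hu_mem, hu0, hu2⟩ := minkowski_disc g hg
  have ht1 : 1 ≤ u 0 ^ 2 + u 1 ^ 2 := H1 u hu_mem hu0
  obtain ⟨m, hm⟩ := hu_mem
  have hmz : ¬(m 0 = 0 ∧ m 1 = 0) := by
    rintro ⟨h0, h1⟩
    apply hu0
    rw [hm]
    funext j
    simp [Matrix.mulVec, dotProduct, Fin.sum_univ_two, h0, h1]
  -- gcd is 1
  set k : ℕ := Int.gcd (m 0) (m 1) with hkk
  have hk0 : k ≠ 0 := by
    intro h
    exact hmz (Int.gcd_eq_zero_iff.mp h)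
  have h2d : 2 * d < 2 := by
    have h32 : Real.sqrt 3 < 2 := by
      rw [show (2:ℝ) = Real.sqrt 4 by
        rw [show (4:ℝ) = 2 ^ 2 by norm_num, Real.sqrt_sq (by norm_num : (0:ℝ) ≤ 2)]]
      exact Real.sqrt_lt_sqrt (by norm_num) (by norm_num)
    linarith
  have hk1 : k = 1 := by
    by_contra hk1
    have hk2 : 2 ≤ k := by omega
    set m' : Fin 2 → ℤ := fun i => m i / (k : ℤ) with hm'
    have hd0' : m 0 = (k : ℤ) * m' 0 := (Int.mul_ediv_cancel' (Int.gcd_dvd_left _ _)).symm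
    have hd1' : m 1 = (k : ℤ) * m' 1 := (Int.mul_ediv_cancel' (Int.gcd_dvd_right _ _)).symm
    set u' : Fin 2 → ℝ := g.mulVec (fun i => (m' i : ℝ)) with hu'
    have hscale : ∀ j, u j = (k : ℝ) * u' j := by
      intro j
      rw [hm, hu']
      simp only [Matrix.mulVec, dotProduct, Fin.sum_univ_two]
      rw [hd0', hd1']
      push_cast
      ring
    have hm'z : ¬(m' 0 = 0 ∧ m' 1 = 0) := by
      rintro ⟨h0, h1⟩
      rw [h0, mul_zero] at hd0'
      rw [h1, mul_zero] at hd1'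
      exact hmz ⟨hd0', hd1'⟩
    have hu'0 : u' ≠ 0 := by
      intro h
      apply hm'z
      have hz := Matrix.eq_zero_of_mulVec_eq_zero hg (by rw [← hu', h])
      have e0 := congrFun hz 0
      have e1 := congrFun hz 1
      norm_num at e0 e1
      exact ⟨e0, e1⟩
    have h1' : 1 ≤ u' 0 ^ 2 + u' 1 ^ 2 := H1 u' ⟨m', rfl⟩ hu'0
    have hkr : (2:ℝ) ≤ (k:ℝ) := by exact_mod_cast hk2
    have : (k:ℝ)^2 * (u' 0 ^ 2 + u' 1 ^ 2) < 2 := by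
      rw [hscale 0, hscale 1] at hu2
      nlinarith
    nlinarith
  have hcop : IsCoprime (m 0) (m 1) := Int.isCoprime_iff_gcd_eq_one.mpr hk1
  obtain ⟨a, b', hab⟩ := hcop
  set q : Fin 2 → ℤ := ![-b', a] with hq
  set v : Fin 2 → ℝ := g.mulVec (fun i => (q i : ℝ)) with hv
  have hcr : u 0 * v 1 - u 1 * v 0 = g.det := by
    rw [hm, hv, cross_mulVec]
    have : ((m 0 : ℝ)) * (q 1 : ℝ) - (m 1 : ℝ) * (q 0 : ℝ) = 1 := by
      have hcast : (a : ℝ) * (m 0 : ℝ) + (b' : ℝ) * (m 1 : ℝ) = 1 := by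
        exact_mod_cast congrArg (fun z : ℤ => (z : ℝ)) hab
      rw [hq]
      show (m 0 : ℝ) * (a : ℝ) - (m 1 : ℝ) * ((-b' : ℤ) : ℝ) = 1
      push_cast
      linear_combination hcast
    rw [this, mul_one]
  have hcrabs : |u 0 * v 1 - u 1 * v 0| = d := by rw [hcr, hdd]
  obtain ⟨n, hbound, hnz⟩ := key_real (u 0) (u 1) (v 0) (v 1) d hlt hd0 ht1 hu2 hcrabs
  set w : Fin 2 → ℝ := g.mulVec (fun i => ((q i - n * m i : ℤ) : ℝ)) with hw
  have hwc : ∀ j, w j = v j - n * u j := by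
    intro j
    rw [hw, hv, hm]
    simp only [Matrix.mulVec, dotProduct, Fin.sum_univ_two]
    push_cast
    ring
  have hw_mem : w ∈ lattice2 g := ⟨fun i => q i - n * m i, rfl⟩
  have hw0 : w ≠ 0 := by
    intro h
    apply hnz
    rw [← hwc 0, ← hwc 1, h]
    simp
  have := H1 w hw_mem hw0
  rw [hwc 0, hwc 1] at this
  linarith



private lemma hexDet : hexMat.det = Real.sqrt 3 / 2 := by
  rw [hexMat, Matrix.det_fin_two_of]
  ring

private lemma sqrt3_pos : (0:ℝ) < Real.sqrt 3 / 2 := by positivity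

private lemma hex_adm : Admissible2 unitDisc hexMat := by
  apply Set.eq_of_subset_of_subset
  · rintro x ⟨⟨m, rfl⟩, hx⟩
    have h0 : hexMat.mulVec (fun i => (m i : ℝ)) 0 = (m 0 : ℝ) + (m 1 : ℝ) / 2 := by
      simp [hexMat, Matrix.mulVec, dotProduct, Fin.sum_univ_two]
      ring
    have h1 : hexMat.mulVec (fun i => (m i : ℝ)) 1 = Real.sqrt 3 / 2 * (m 1 : ℝ) := by
      simp [hexMat, Matrix.mulVec, dotProduct, Fin.sum_univ_two]
    have hval : hexMat.mulVec (fun i => (m i : ℝ)) 0 ^ 2 + hexMat.mulVec (fun i => (m i : ℝ)) 1 ^ 2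
        = ((m 0 ^ 2 + m 0 * m 1 + m 1 ^ 2 : ℤ) : ℝ) := by
      rw [h0, h1, mul_pow, div_pow, Real.sq_sqrt (by norm_num : (0:ℝ) ≤ 3)]
      push_cast
      ring
    have hmem : hexMat.mulVec (fun i => (m i : ℝ)) ∈ unitDisc := hx
    rw [unitDisc, Set.mem_setOf_eq, hval] at hmem
    have hint : m 0 ^ 2 + m 0 * m 1 + m 1 ^ 2 < 1 := by exact_mod_cast hmem
    have hnn : 0 ≤ m 0 ^ 2 + m 0 * m 1 + m 1 ^ 2 := by nlinarith [sq_nonneg (2 * m 0 + m 1), sq_nonneg (m 1)]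
    have hzero : m 0 ^ 2 + m 0 * m 1 + m 1 ^ 2 = 0 := by omega
    have hm1 : m 1 = 0 := by nlinarith [sq_nonneg (2 * m 0 + m 1)]
    have hm0 : m 0 = 0 := by nlinarith
    have : hexMat.mulVec (fun i => (m i : ℝ)) = 0 := by
      funext j
      fin_cases j <;> simp [h0, h1, hm0, hm1]
    exact this
  · intro x hx
    rw [Set.mem_singleton_iff] at hx
    subst hx
    constructor
    · refine ⟨0, ?_⟩
      funext j
      simp [Matrix.mulVec, dotProduct, Fin.sum_univ_two]
    · show (0:ℝ) ^ 2 + (0:ℝ) ^ 2 < 1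
      norm_num


/-- Every lattice of covolume `< √3/2` meets the open unit disc nontrivially, and the
critical determinant of the disc is `√3/2`. -/
theorem critical_determinant_of_disc :
    (∀ g : Matrix (Fin 2) (Fin 2) ℝ, g.det ≠ 0 → |g.det| < Real.sqrt 3 / 2 →
      ∃ x ∈ lattice2 g ∩ unitDisc, x ≠ 0) ∧
    critDet2 unitDisc = Real.sqrt 3 / 2 := by
  refine ⟨disc_point, ?_⟩
  have hleast : IsLeast {d | ∃ g : Matrix (Fin 2) (Fin 2) ℝ,
      g.det ≠ 0 ∧ Admissible2 unitDisc g ∧ d = |g.det|} (Real.sqrt 3 / 2) := by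
    constructor
    · exact ⟨hexMat, by rw [hexDet]; exact sqrt3_pos.ne',
        hex_adm, by rw [hexDet, abs_of_pos sqrt3_pos]⟩
    · rintro d' ⟨g, hg, hadm, rfl⟩
      by_contra h
      push_neg at h
      obtain ⟨x, hx_mem, hx0⟩ := disc_point g hg h
      rw [Admissible2] at hadm
      rw [hadm] at hx_mem
      exact hx0 hx_mem
  exact hleast.csInf_eq
end
end

section
/- Every D-critical lattice for the open unit disc D is a rotation of the hexagonal lattice: if Λ is a lattice with Λ ∩ D = {0} and covolume √3/2, then Λ = k·(ℤ·(1,0) + ℤ·(1/2,√3/2)) for some k ∈ SO(2). -/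
open MeasureTheory

noncomputable section

/-- value of the quadratic form of the lattice at integer vector m -/
def auxQ (g : Matrix (Fin 2) (Fin 2) ℝ) (m : Fin 2 → ℤ) : ℝ :=
  (g 0 0 * m 0 + g 0 1 * m 1)^2 + (g 1 0 * m 0 + g 1 1 * m 1)^2

def auxUni (p : (Fin 2 → ℤ) × (Fin 2 → ℤ)) : Prop :=
  p.1 0 * p.2 1 - p.1 1 * p.2 0 = 1 ∨ p.1 0 * p.2 1 - p.1 1 * p.2 0 = -1

def auxF (g : Matrix (Fin 2) (Fin 2) ℝ) (p : (Fin 2 → ℤ) × (Fin 2 → ℤ)) : ℝ :=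
  auxQ g p.1 + auxQ g p.2

lemma auxQ_nonneg (g : Matrix (Fin 2) (Fin 2) ℝ) (m : Fin 2 → ℤ) : 0 ≤ auxQ g m := by
  unfold auxQ; positivity

lemma auxQ_eq (g : Matrix (Fin 2) (Fin 2) ℝ) (m : Fin 2 → ℤ) :
    auxQ g m = (g.mulVec (fun i => (m i : ℝ)) 0)^2 + (g.mulVec (fun i => (m i : ℝ)) 1)^2 := by
  simp [auxQ, Matrix.mulVec, dotProduct, Fin.sum_univ_two]

lemma aux_cast_mulVec (W : Matrix (Fin 2) (Fin 2) ℤ) (m : Fin 2 → ℤ) :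
    (W.map (Int.cast : ℤ → ℝ)).mulVec (fun i => (m i : ℝ)) = fun i => ((W.mulVec m) i : ℝ) := by
  funext i
  simp [Matrix.mulVec, dotProduct, Fin.sum_univ_two, Matrix.map_apply]

lemma aux_lattice_mul (g : Matrix (Fin 2) (Fin 2) ℝ) (W : Matrix (Fin 2) (Fin 2) ℤ)
    (hW : W.det = 1 ∨ W.det = -1) :
    lattice2 (g * W.map (Int.cast : ℤ → ℝ)) = lattice2 g := by
  have hdet2 : W.det * W.det = 1 := by rcases hW with h | h <;> rw [h] <;> ring
  have hWV : W * (W.det • W.adjugate) = 1 := by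
    rw [Matrix.mul_smul, Matrix.mul_adjugate, smul_smul, hdet2, one_smul]
  ext x
  constructor
  · rintro ⟨m, rfl⟩
    exact ⟨W.mulVec m, by rw [← Matrix.mulVec_mulVec, aux_cast_mulVec]⟩
  · rintro ⟨m, rfl⟩
    refine ⟨(W.det • W.adjugate).mulVec m, ?_⟩
    have h3 : W.map (Int.cast : ℤ → ℝ) * (W.det • W.adjugate).map (Int.cast : ℤ → ℝ) = 1 := by
      have h4 : ((W * (W.det • W.adjugate)).map (Int.castRingHom ℝ) : Matrix (Fin 2) (Fin 2) ℝ)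
          = (1 : Matrix (Fin 2) (Fin 2) ℤ).map (Int.castRingHom ℝ) := by rw [hWV]
      rw [Matrix.map_mul] at h4
      simpa using h4
    calc g.mulVec (fun i => (m i : ℝ))
        = ((g * W.map (Int.cast : ℤ → ℝ)) * (W.det • W.adjugate).map (Int.cast : ℤ → ℝ)).mulVec
            (fun i => (m i : ℝ)) := by rw [mul_assoc, h3, mul_one]
      _ = (g * W.map (Int.cast : ℤ → ℝ)).mulVec
            (((W.det • W.adjugate).map (Int.cast : ℤ → ℝ)).mulVec (fun i => (m i : ℝ))) :=
          (Matrix.mulVec_mulVec _ _ _).symm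
      _ = (g * W.map (Int.cast : ℤ → ℝ)).mulVec (fun i => (((W.det • W.adjugate).mulVec m) i : ℝ)) := by
          rw [aux_cast_mulVec]

lemma aux_bound (g : Matrix (Fin 2) (Fin 2) ℝ) (hdet : g.det ≠ 0) (C : ℝ) :
    ∃ N : ℤ, ∀ m : Fin 2 → ℤ, auxQ g m ≤ C → ∀ i, |m i| ≤ N := by
  set A := g⁻¹ with hA
  set K : ℝ := (|A 0 0| + |A 0 1| + |A 1 0| + |A 1 1|) * (Real.sqrt C + Real.sqrt C) with hK
  refine ⟨max ⌈K⌉ 0, fun m hm i => ?_⟩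
  set x := g.mulVec (fun i => (m i : ℝ)) with hx
  have hinv : A * g = 1 := Matrix.nonsing_inv_mul g (isUnit_iff_ne_zero.mpr hdet)
  have hvec : (fun i => (m i : ℝ)) = A.mulVec x := by
    rw [hx, Matrix.mulVec_mulVec, hinv, Matrix.one_mulVec]
  have hmi : (m i : ℝ) = A i 0 * x 0 + A i 1 * x 1 := by
    have := congrFun hvec i
    simpa [Matrix.mulVec, dotProduct, Fin.sum_univ_two] using this
  have hxQ : x 0 ^ 2 + x 1 ^ 2 ≤ C := by rw [hx, ← auxQ_eq]; exact hm
  have hx0 : |x 0| ≤ Real.sqrt C := by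
    rw [← Real.sqrt_sq_eq_abs]
    exact Real.sqrt_le_sqrt (by nlinarith [sq_nonneg (x 1)])
  have hx1 : |x 1| ≤ Real.sqrt C := by
    rw [← Real.sqrt_sq_eq_abs]
    exact Real.sqrt_le_sqrt (by nlinarith [sq_nonneg (x 0)])
  have habs : |(m i : ℝ)| ≤ K := by
    rw [hmi]
    have h1 : |A i 0 * x 0 + A i 1 * x 1| ≤ |A i 0| * |x 0| + |A i 1| * |x 1| := by
      calc |A i 0 * x 0 + A i 1 * x 1| ≤ |A i 0 * x 0| + |A i 1 * x 1| := abs_add_le _ _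
        _ = |A i 0| * |x 0| + |A i 1| * |x 1| := by rw [abs_mul, abs_mul]
    refine h1.trans ?_
    have hi0 : |A i 0| ≤ |A 0 0| + |A 0 1| + |A 1 0| + |A 1 1| := by
      fin_cases i <;> simp <;>
        nlinarith [abs_nonneg (A 0 0), abs_nonneg (A 0 1), abs_nonneg (A 1 0), abs_nonneg (A 1 1)]
    have hi1 : |A i 1| ≤ |A 0 0| + |A 0 1| + |A 1 0| + |A 1 1| := by
      fin_cases i <;> simp <;>
        nlinarith [abs_nonneg (A 0 0), abs_nonneg (A 0 1), abs_nonneg (A 1 0), abs_nonneg (A 1 1)]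
    rw [hK]
    nlinarith [abs_nonneg (A i 0), abs_nonneg (A i 1), abs_nonneg (x 0), abs_nonneg (x 1),
      Real.sqrt_nonneg C, hx0, hx1]
  have hfin2 : ((|m i| : ℤ) : ℝ) ≤ ((max ⌈K⌉ 0 : ℤ) : ℝ) := by
    rw [Int.cast_abs]
    refine habs.trans ((Int.le_ceil K).trans ?_)
    exact_mod_cast (le_max_left ⌈K⌉ 0)
  exact_mod_cast hfin2

lemma aux_finite (N : ℤ) : {m : Fin 2 → ℤ | ∀ i, |m i| ≤ N}.Finite := by
  refine (Set.Finite.pi fun _ : Fin 2 => Set.finite_Icc (-N) N).subset ?_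
  intro m hm
  exact Set.mem_univ_pi.mpr fun i => Set.mem_Icc.mpr (abs_le.mp (hm i))

lemma aux_min (g : Matrix (Fin 2) (Fin 2) ℝ) (hdet : g.det ≠ 0) :
    ∃ p : (Fin 2 → ℤ) × (Fin 2 → ℤ), auxUni p ∧ ∀ q, auxUni q → auxF g p ≤ auxF g q := by
  set p₀ : (Fin 2 → ℤ) × (Fin 2 → ℤ) := (![1, 0], ![0, 1]) with hp₀def
  have hp₀ : auxUni p₀ := by left; simp [p₀]
  obtain ⟨N, hN⟩ := aux_bound g hdet (auxF g p₀)
  set S := {q : (Fin 2 → ℤ) × (Fin 2 → ℤ) | auxUni q ∧ auxF g q ≤ auxF g p₀} with hS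
  have hfin : S.Finite := by
    refine ((aux_finite N).prod (aux_finite N)).subset ?_
    rintro ⟨n, n'⟩ ⟨-, hle⟩
    have he : auxF g (n, n') = auxQ g n + auxQ g n' := rfl
    have h1 : auxQ g n ≤ auxF g p₀ := by
      have := auxQ_nonneg g n'; linarith [hle, he.symm.le, he.le]
    have h2 : auxQ g n' ≤ auxF g p₀ := by
      have := auxQ_nonneg g n; linarith [hle, he.symm.le, he.le]
    exact Set.mem_prod.mpr ⟨hN n h1, hN n' h2⟩
  obtain ⟨p, hpS, hp⟩ := Set.exists_min_image S (auxF g) hfin ⟨p₀, hp₀, le_refl _⟩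
  refine ⟨p, hpS.1, fun q hq => ?_⟩
  by_cases h : auxF g q ≤ auxF g p₀
  · exact hp q ⟨hq, h⟩
  · exact (hp p₀ ⟨hp₀, le_refl _⟩).trans (le_of_not_ge h)


lemma aux_final (g : Matrix (Fin 2) (Fin 2) ℝ) (m n : Fin 2 → ℤ) (u0 u1 w0 w1 : ℝ)
    (hu0 : g 0 0 * m 0 + g 0 1 * m 1 = u0) (hu1 : g 1 0 * m 0 + g 1 1 * m 1 = u1)
    (hw0 : g 0 0 * n 0 + g 0 1 * n 1 = w0) (hw1 : g 1 0 * n 0 + g 1 1 * n 1 = w1)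
    (huni : m 0 * n 1 - m 1 * n 0 = 1 ∨ m 0 * n 1 - m 1 * n 0 = -1)
    (hQu : u0^2 + u1^2 = 1)
    (ht : u0 * w0 + u1 * w1 = 1/2)
    (hD : u0 * w1 - u1 * w0 = Real.sqrt 3 / 2) :
    ∃ k : Matrix (Fin 2) (Fin 2) ℝ, k.transpose * k = 1 ∧ k.det = 1 ∧
      lattice2 g = lattice2 (k * hexMat) := by
  refine ⟨!![u0, -u1; u1, u0], ?_, ?_, ?_⟩
  · have hT : (!![u0, -u1; u1, u0] : Matrix (Fin 2) (Fin 2) ℝ).transpose = !![u0, u1; -u1, u0] := by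
      ext i j; fin_cases i <;> fin_cases j <;> simp [Matrix.transpose_apply]
    rw [hT, Matrix.mul_fin_two, Matrix.one_fin_two]
    ext i j; fin_cases i <;> fin_cases j <;> simp <;>
      first
        | linear_combination hQu
        | ring
  · rw [Matrix.det_fin_two]
    simp
    linear_combination hQu
  · have hW : (!![m 0, n 0; m 1, n 1] : Matrix (Fin 2) (Fin 2) ℤ).det = 1 ∨
        (!![m 0, n 0; m 1, n 1] : Matrix (Fin 2) (Fin 2) ℤ).det = -1 := by
      rw [Matrix.det_fin_two_of]; rcases huni with h | h <;> [left; right] <;> linarith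
    have hlat := aux_lattice_mul g !![m 0, n 0; m 1, n 1] hW
    rw [← hlat]
    have hgc : g * (!![m 0, n 0; m 1, n 1] : Matrix (Fin 2) (Fin 2) ℤ).map (Int.cast : ℤ → ℝ)
        = !![u0, -u1; u1, u0] * hexMat := by
      ext i j
      fin_cases i <;> fin_cases j <;>
        simp [Matrix.mul_apply, Fin.sum_univ_two, Matrix.map_apply, hexMat]
      · linear_combination hu0
      · linear_combination hw0 + u0 * ht - u1 * hD - w0 * hQu
      · linear_combination hu1
      · linear_combination hw1 + u1 * ht + u0 * hD - w1 * hQu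
    rw [hgc]

set_option maxHeartbeats 1000000 in
/-- Every `D`-critical lattice is a rotation of the hexagonal lattice. -/
theorem critical_lattice_of_disc_is_rotated_hexagonal (g : Matrix (Fin 2) (Fin 2) ℝ)
    (hdet : g.det ≠ 0) (hadm : Admissible2 unitDisc g)
    (hcov : |g.det| = Real.sqrt 3 / 2) :
    ∃ k : Matrix (Fin 2) (Fin 2) ℝ, k.transpose * k = 1 ∧ k.det = 1 ∧
      lattice2 g = lattice2 (k * hexMat) := by
  -- admissibility in quadratic-form language
  have hQadm : ∀ n : Fin 2 → ℤ, n ≠ 0 → 1 ≤ auxQ g n := by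
    intro n hn
    by_contra hlt
    push_neg at hlt
    have hmem : g.mulVec (fun i => (n i : ℝ)) ∈ lattice2 g ∩ unitDisc := by
      refine ⟨⟨n, rfl⟩, ?_⟩
      have he := auxQ_eq g n
      simp only [unitDisc, Set.mem_setOf_eq]
      rw [← he]
      exact hlt
    rw [hadm] at hmem
    have h0 : g.mulVec (fun i => (n i : ℝ)) = 0 := hmem
    have hz : (fun i => ((n i : ℤ) : ℝ)) = 0 := Matrix.eq_zero_of_mulVec_eq_zero hdet h0
    apply hn; funext i
    have h6 := congrFun hz i
    simp only [Pi.zero_apply] at h6 ⊢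
    exact_mod_cast h6
  obtain ⟨⟨m, m'⟩, huni, hmin⟩ := aux_min g hdet
  have huni' : m 0 * m' 1 - m 1 * m' 0 = 1 ∨ m 0 * m' 1 - m 1 * m' 0 = -1 := huni
  obtain ⟨u0, hu0⟩ : ∃ a : ℝ, g 0 0 * m 0 + g 0 1 * m 1 = a := ⟨_, rfl⟩
  obtain ⟨u1, hu1⟩ : ∃ a : ℝ, g 1 0 * m 0 + g 1 1 * m 1 = a := ⟨_, rfl⟩
  obtain ⟨v0, hv0⟩ : ∃ a : ℝ, g 0 0 * m' 0 + g 0 1 * m' 1 = a := ⟨_, rfl⟩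
  obtain ⟨v1, hv1⟩ : ∃ a : ℝ, g 1 0 * m' 0 + g 1 1 * m' 1 = a := ⟨_, rfl⟩
  have hQm : auxQ g m = u0 ^ 2 + u1 ^ 2 := by simp only [auxQ]; rw [hu0, hu1]
  have hQm' : auxQ g m' = v0 ^ 2 + v1 ^ 2 := by simp only [auxQ]; rw [hv0, hv1]
  have hm0 : m ≠ 0 := by
    rintro rfl; rcases huni' with h | h <;> simp at h
  have hm'0 : m' ≠ 0 := by
    rintro rfl; rcases huni' with h | h <;> simp at h
  have h1 : 1 ≤ u0 ^ 2 + u1 ^ 2 := by rw [← hQm]; exact hQadm m hm0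
  have h2 : 1 ≤ v0 ^ 2 + v1 ^ 2 := by rw [← hQm']; exact hQadm m' hm'0
  -- the four minimality comparisons
  have hexp_add : auxQ g (m + m') = (u0 + v0) ^ 2 + (u1 + v1) ^ 2 := by
    simp only [auxQ, Pi.add_apply]
    rw [← hu0, ← hu1, ← hv0, ← hv1]
    push_cast; ring
  have hexp_sub : auxQ g (m' - m) = (v0 - u0) ^ 2 + (v1 - u1) ^ 2 := by
    simp only [auxQ, Pi.sub_apply]
    rw [← hu0, ← hu1, ← hv0, ← hv1]
    push_cast; ring
  have hexp_sub' : auxQ g (m - m') = (u0 - v0) ^ 2 + (u1 - v1) ^ 2 := by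
    simp only [auxQ, Pi.sub_apply]
    rw [← hu0, ← hu1, ← hv0, ← hv1]
    push_cast; ring
  have hA : 0 ≤ (u0 ^ 2 + u1 ^ 2) + 2 * (u0 * v0 + u1 * v1) := by
    have hq : auxQ g m + auxQ g m' ≤ auxQ g m + auxQ g (m + m') := by
      refine hmin (m, m + m') ?_
      rcases huni' with h | h <;> [left; right] <;>
        simp only [Pi.add_apply] <;> linear_combination h
    rw [hQm, hQm', hexp_add] at hq
    linarith [hq, sq_nonneg (u0+v0), sq_nonneg (u1+v1)]
  have hB : 0 ≤ (u0 ^ 2 + u1 ^ 2) - 2 * (u0 * v0 + u1 * v1) := by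
    have hq : auxQ g m + auxQ g m' ≤ auxQ g m + auxQ g (m' - m) := by
      refine hmin (m, m' - m) ?_
      rcases huni' with h | h <;> [left; right] <;>
        simp only [Pi.sub_apply] <;> linear_combination h
    rw [hQm, hQm', hexp_sub] at hq
    linarith [hq]
  have hC : 0 ≤ (v0 ^ 2 + v1 ^ 2) + 2 * (u0 * v0 + u1 * v1) := by
    have hq : auxQ g m + auxQ g m' ≤ auxQ g (m + m') + auxQ g m' := by
      refine hmin (m + m', m') ?_
      rcases huni' with h | h <;> [left; right] <;>
        simp only [Pi.add_apply] <;> linear_combination h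
    rw [hQm, hQm', hexp_add] at hq
    linarith [hq]
  have hD' : 0 ≤ (v0 ^ 2 + v1 ^ 2) - 2 * (u0 * v0 + u1 * v1) := by
    have hq : auxQ g m + auxQ g m' ≤ auxQ g (m - m') + auxQ g m' := by
      refine hmin (m - m', m') ?_
      rcases huni' with h | h <;> [left; right] <;>
        simp only [Pi.sub_apply] <;> linear_combination h
    rw [hQm, hQm', hexp_sub'] at hq
    linarith [hq]
  -- determinant facts
  have hr : u0 * v1 - u1 * v0 = g.det * ((m 0 * m' 1 - m 1 * m' 0 : ℤ) : ℝ) := by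
    rw [← hu0, ← hu1, ← hv0, ← hv1, Matrix.det_fin_two]
    push_cast; ring
  have hgd : g.det = Real.sqrt 3 / 2 ∨ g.det = -(Real.sqrt 3 / 2) := (abs_eq (by positivity)).mp hcov
  have hDval : u0 * v1 - u1 * v0 = Real.sqrt 3 / 2 ∨ u0 * v1 - u1 * v0 = -(Real.sqrt 3 / 2) := by
    rcases huni' with h | h <;> rw [hr, h] <;> rcases hgd with h' | h' <;> rw [h'] <;>
      [left; right; right; left] <;> push_cast <;> ring
  have h3 : Real.sqrt 3 ^ 2 = 3 := Real.sq_sqrt (by norm_num)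
  have hD2 : (u0 * v1 - u1 * v0) ^ 2 = 3 / 4 := by
    rcases hDval with h | h <;> rw [h] <;> linear_combination h3 / 4
  have hlag : (u0 ^ 2 + u1 ^ 2) * (v0 ^ 2 + v1 ^ 2)
      = (u0 * v0 + u1 * v1) ^ 2 + (u0 * v1 - u1 * v0) ^ 2 := by ring
  -- the key equalities
  have hQupos : (0:ℝ) ≤ u0 ^ 2 + u1 ^ 2 := by positivity
  have hQvpos : (0:ℝ) ≤ v0 ^ 2 + v1 ^ 2 := by positivity
  have hQu1 : u0 ^ 2 + u1 ^ 2 = 1 := by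
    refine le_antisymm ?_ h1
    have P1 := mul_nonneg hA hD'
    have P2 := mul_nonneg hB hC
    have P3 := mul_nonneg hQupos (by linarith : (0:ℝ) ≤ v0 ^ 2 + v1 ^ 2 - 1)
    nlinarith [P1, P2, P3, hlag, hD2]
  have hQv1 : v0 ^ 2 + v1 ^ 2 = 1 := by
    refine le_antisymm ?_ h2
    have P1 := mul_nonneg hA hD'
    have P2 := mul_nonneg hB hC
    have P3 := mul_nonneg hQvpos (by linarith : (0:ℝ) ≤ u0 ^ 2 + u1 ^ 2 - 1)
    nlinarith [P1, P2, P3, hlag, hD2]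
  have htsq : (u0 * v0 + u1 * v1) ^ 2 = 1 / 4 := by
    linear_combination (-1) * hlag + (v0 ^ 2 + v1 ^ 2) * hQu1 + hQv1 - hD2
  have ht12 : u0 * v0 + u1 * v1 = 1 / 2 ∨ u0 * v0 + u1 * v1 = -(1 / 2) := by
    have h5 : (u0 * v0 + u1 * v1 - 1 / 2) * (u0 * v0 + u1 * v1 + 1 / 2) = 0 := by
      linear_combination htsq
    rcases mul_eq_zero.mp h5 with h | h
    · left; linarith
    · right; linarith
  -- case analysis and conclusion
  rcases ht12 with ht | ht <;> rcases hDval with hDv | hDv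
  · -- t = 1/2, D = √3/2 : take n = m'
    exact aux_final g m m' u0 u1 v0 v1 hu0 hu1 hv0 hv1 huni' hQu1 ht hDv
  · -- t = 1/2, D = -√3/2 : take n = m - m'
    refine aux_final g m (m - m') u0 u1 (u0 - v0) (u1 - v1) hu0 hu1 ?_ ?_ ?_ hQu1 ?_ ?_
    · simp only [Pi.sub_apply]; push_cast; linear_combination hu0 - hv0
    · simp only [Pi.sub_apply]; push_cast; linear_combination hu1 - hv1
    · rcases huni' with h | h <;> [right; left] <;>
        simp only [Pi.sub_apply] <;> linear_combination -h
    · linear_combination hQu1 - ht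
    · linear_combination -hDv
  · -- t = -1/2, D = √3/2 : take n = m + m'
    refine aux_final g m (m + m') u0 u1 (u0 + v0) (u1 + v1) hu0 hu1 ?_ ?_ ?_ hQu1 ?_ ?_
    · simp only [Pi.add_apply]; push_cast; linear_combination hu0 + hv0
    · simp only [Pi.add_apply]; push_cast; linear_combination hu1 + hv1
    · rcases huni' with h | h <;> [left; right] <;>
        simp only [Pi.add_apply] <;> linear_combination h
    · linear_combination hQu1 + ht
    · linear_combination hDv
  · -- t = -1/2, D = -√3/2 : take n = -m'
    refine aux_final g m (-m') u0 u1 (-v0) (-v1) hu0 hu1 ?_ ?_ ?_ hQu1 ?_ ?_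
    · simp only [Pi.neg_apply]; push_cast; linear_combination -hv0
    · simp only [Pi.neg_apply]; push_cast; linear_combination -hv1
    · rcases huni' with h | h <;> [right; left] <;>
        simp only [Pi.neg_apply] <;> linear_combination -h
    · linear_combination -ht
    · linear_combination -hDv
end
end

section
/- For the open square S = (-1,1)² ⊂ ℝ², a lattice of covolume 1 is S-admissible if and only if it is of the form [[1,t],[0,1]]·ℤ² or [[1,0],[t,1]]·ℤ² for some t ∈ ℝ. In particular Δ(S) = 1 and the critical locus of S is the union of these two families of sheared integer lattices. -/
open MeasureTheory

noncomputable section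

namespace SqAux

lemma vec2_ext {x y : Fin 2 → ℝ} (h0 : x 0 = y 0) (h1 : x 1 = y 1) : x = y := by
  funext i; fin_cases i <;> assumption

lemma mulVec_apply (g : Matrix (Fin 2) (Fin 2) ℝ) (v : Fin 2 → ℝ) (i : Fin 2) :
    g.mulVec v i = g i 0 * v 0 + g i 1 * v 1 := by
  simp [Matrix.mulVec, dotProduct, Fin.sum_univ_two]

lemma mem_lattice2 {g : Matrix (Fin 2) (Fin 2) ℝ} {x : Fin 2 → ℝ} :
    x ∈ lattice2 g ↔ ∃ a b : ℤ,
      x 0 = g 0 0 * a + g 0 1 * b ∧ x 1 = g 1 0 * a + g 1 1 * b := by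
  constructor
  · rintro ⟨m, rfl⟩
    exact ⟨m 0, m 1, by simp [mulVec_apply], by simp [mulVec_apply]⟩
  · rintro ⟨a, b, h0, h1⟩
    refine ⟨![a, b], vec2_ext ?_ ?_⟩ <;>
      simp [mulVec_apply, h0, h1]

lemma zero_mem_lattice2 (g : Matrix (Fin 2) (Fin 2) ℝ) : (0 : Fin 2 → ℝ) ∈ lattice2 g :=
  mem_lattice2.mpr ⟨0, 0, by simp, by simp⟩

lemma admissible_iff {g : Matrix (Fin 2) (Fin 2) ℝ} :
    Admissible2 openSquare g ↔ ∀ x ∈ lattice2 g, |x 0| < 1 → |x 1| < 1 → x = 0 := by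
  unfold Admissible2
  constructor
  · intro h x hx h0 h1
    have hx' : x ∈ lattice2 g ∩ openSquare := ⟨hx, h0, h1⟩
    rwa [h] at hx'
  · intro h
    ext x
    constructor
    · rintro ⟨hx, hs⟩
      exact h x hx hs.1 hs.2
    · rintro rfl
      exact ⟨zero_mem_lattice2 g, by simp [openSquare]⟩

lemma int_cast_abs_lt_one {n : ℤ} (h : |(n : ℝ)| < 1) : n = 0 := by
  by_contra hn
  have h1 : (1 : ℤ) ≤ |n| := Int.one_le_abs hn
  have : (1 : ℝ) ≤ |(n : ℝ)| := by
    rw [← Int.cast_abs]; exact_mod_cast h1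
  linarith

lemma shear1_adm (t : ℝ) : Admissible2 openSquare !![1, t; 0, 1] := by
  rw [admissible_iff]
  intro x hx h0 h1
  obtain ⟨a, b, e0, e1⟩ := mem_lattice2.mp hx
  norm_num [Matrix.cons_val_zero, Matrix.cons_val_one, Matrix.head_cons] at e0 e1
  have hb : b = 0 := int_cast_abs_lt_one (e1 ▸ h1)
  subst hb
  norm_num at e0
  have ha : a = 0 := int_cast_abs_lt_one (e0 ▸ h0)
  subst ha
  norm_num at e0 e1
  exact vec2_ext (by simpa using e0) (by simpa using e1)

lemma shear2_adm (t : ℝ) : Admissible2 openSquare !![1, 0; t, 1] := by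
  rw [admissible_iff]
  intro x hx h0 h1
  obtain ⟨a, b, e0, e1⟩ := mem_lattice2.mp hx
  norm_num [Matrix.cons_val_zero, Matrix.cons_val_one, Matrix.head_cons] at e0 e1
  have ha : a = 0 := int_cast_abs_lt_one (e0 ▸ h0)
  subst ha
  norm_num at e1
  have hb : b = 0 := int_cast_abs_lt_one (e1 ▸ h1)
  subst hb
  norm_num at e0 e1
  exact vec2_ext (by simpa using e0) (by simpa using e1)


section Mink

variable {g : Matrix (Fin 2) (Fin 2) ℝ}

/-- The basis of ℝ² given by the columns of an invertible matrix. -/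
def colBasis (hg : g.det ≠ 0) : Module.Basis (Fin 2) ℝ (Fin 2 → ℝ) :=
  (Pi.basisFun ℝ (Fin 2)).map
    (g.toLinearEquiv' (g.invertibleOfIsUnitDet (isUnit_iff_ne_zero.mpr hg)))

lemma colBasis_apply (hg : g.det ≠ 0) (i j : Fin 2) : colBasis hg i j = g j i := by
  have : colBasis hg i = g.mulVec (Pi.single i 1) := by
    simp only [colBasis, Module.Basis.map_apply, Pi.basisFun_apply]
    rfl
  rw [this, Matrix.mulVec_single]
  simp

lemma span_colBasis (hg : g.det ≠ 0) :
    ((Submodule.span ℤ (Set.range ⇑(colBasis hg)) : Submodule ℤ (Fin 2 → ℝ)) : Set (Fin 2 → ℝ))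
      = lattice2 g := by
  ext x
  rw [SetLike.mem_coe, Submodule.mem_span_range_iff_exists_fun]
  constructor
  · rintro ⟨c, rfl⟩
    refine mem_lattice2.mpr ⟨c 0, c 1, ?_, ?_⟩ <;>
      simp [Fin.sum_univ_two, colBasis_apply hg] <;> ring
  · rintro hx
    obtain ⟨a, b, e0, e1⟩ := mem_lattice2.mp hx
    refine ⟨![a, b], ?_⟩
    funext j
    fin_cases j <;>
      simp [Fin.sum_univ_two, colBasis_apply hg] <;> [rw [e0]; rw [e1]] <;> ring

lemma volume_fd (hg : g.det ≠ 0) :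
    volume (ZSpan.fundamentalDomain (colBasis hg)) = ENNReal.ofReal |g.det| := by
  rw [ZSpan.volume_fundamentalDomain]
  congr 1
  have : (Matrix.of ⇑(colBasis hg)) = g.transpose := by
    ext i j
    simp [colBasis_apply hg, Matrix.transpose_apply]
  rw [this, Matrix.det_transpose]

lemma openSquare_eq : openSquare = Set.pi Set.univ (fun _ : Fin 2 => Set.Ioo (-1:ℝ) 1) := by
  ext x
  simp only [openSquare, Set.mem_setOf_eq, Set.mem_univ_pi, Fin.forall_fin_two, Set.mem_Ioo,
    abs_lt]

def closedSquare : Set (Fin 2 → ℝ) := Set.pi Set.univ (fun _ : Fin 2 => Set.Icc (-1:ℝ) 1)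

lemma volume_openSquare : volume openSquare = 4 := by
  rw [openSquare_eq, volume_pi_pi]
  simp [Real.volume_Ioo]
  rw [show ((1:ℝ) + 1) = 2 by norm_num, ← ENNReal.ofReal_pow (by norm_num : (0:ℝ) ≤ 2)]
  norm_num

lemma volume_closedSquare : volume closedSquare = 4 := by
  rw [closedSquare, volume_pi_pi]
  simp [Real.volume_Icc]
  rw [show ((1:ℝ) + 1) = 2 by norm_num, ← ENNReal.ofReal_pow (by norm_num : (0:ℝ) ≤ 2)]
  norm_num

lemma convex_openSquare : Convex ℝ openSquare := by
  rw [openSquare_eq]; exact convex_pi (fun i _ => convex_Ioo _ _)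

lemma convex_closedSquare : Convex ℝ closedSquare := convex_pi (fun i _ => convex_Icc _ _)

lemma symm_openSquare : ∀ x ∈ openSquare, -x ∈ openSquare := by
  intro x hx
  simpa [openSquare, abs_neg] using hx

lemma symm_closedSquare : ∀ x ∈ closedSquare, -x ∈ closedSquare := by
  intro x hx
  rw [closedSquare, Set.mem_univ_pi] at hx ⊢
  intro i
  have := hx i
  simp only [Set.mem_Icc, Pi.neg_apply] at *
  constructor <;> linarith [(this).1, (this).2]

lemma compact_closedSquare : IsCompact closedSquare :=
  isCompact_univ_pi (fun _ => isCompact_Icc)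

lemma finrank2 : Module.finrank ℝ (Fin 2 → ℝ) = 2 := Module.finrank_fin_fun ℝ

lemma exists_nonzero_in_closedSquare (hg : g.det ≠ 0) (hd : |g.det| ≤ 1) :
    ∃ x ∈ lattice2 g, x ≠ 0 ∧ |x 0| ≤ 1 ∧ |x 1| ≤ 1 := by
  classical
  set b := colBasis hg
  set L : AddSubgroup (Fin 2 → ℝ) := (Submodule.span ℤ (Set.range ⇑b)).toAddSubgroup
  have : Countable L := inferInstanceAs (Countable (Submodule.span ℤ (Set.range ⇑b)))
  have fund := ZSpan.isAddFundamentalDomain' b (volume : Measure (Fin 2 → ℝ))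
  have hvol : volume (ZSpan.fundamentalDomain b) * 2 ^ Module.finrank ℝ (Fin 2 → ℝ)
      ≤ volume closedSquare := by
    rw [volume_fd hg, volume_closedSquare, finrank2]
    calc ENNReal.ofReal |g.det| * 2 ^ 2 ≤ 1 * 2 ^ 2 := by
          gcongr
          exact ENNReal.ofReal_le_one.mpr hd
      _ = 4 := by norm_num
  obtain ⟨x, hx0, hxs⟩ := exists_ne_zero_mem_lattice_of_measure_mul_two_pow_le_measure
    fund symm_closedSquare convex_closedSquare compact_closedSquare hvol
  refine ⟨(x : Fin 2 → ℝ), ?_, ?_, ?_, ?_⟩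
  · rw [← span_colBasis hg]; exact x.2
  · simpa using fun h => hx0 (Subtype.ext h)
  · have := (Set.mem_univ_pi.mp hxs) 0
    rw [Set.mem_Icc] at this; rw [abs_le]; exact this
  · have := (Set.mem_univ_pi.mp hxs) 1
    rw [Set.mem_Icc] at this; rw [abs_le]; exact this

lemma exists_nonzero_in_openSquare (hg : g.det ≠ 0) (hd : |g.det| < 1) :
    ∃ x ∈ lattice2 g, x ≠ 0 ∧ |x 0| < 1 ∧ |x 1| < 1 := by
  classical
  set b := colBasis hg
  set L : AddSubgroup (Fin 2 → ℝ) := (Submodule.span ℤ (Set.range ⇑b)).toAddSubgroup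
  have : Countable L := inferInstanceAs (Countable (Submodule.span ℤ (Set.range ⇑b)))
  have fund := ZSpan.isAddFundamentalDomain' b (volume : Measure (Fin 2 → ℝ))
  have hvol : volume (ZSpan.fundamentalDomain b) * 2 ^ Module.finrank ℝ (Fin 2 → ℝ)
      < volume openSquare := by
    rw [volume_fd hg, volume_openSquare, finrank2]
    calc ENNReal.ofReal |g.det| * 2 ^ 2 < 1 * 2 ^ 2 := by
          gcongr
          · norm_num
          · exact ENNReal.ofReal_lt_one.mpr hd
      _ = 4 := by norm_num
  obtain ⟨x, hx0, hxs⟩ := exists_ne_zero_mem_lattice_of_measure_mul_two_pow_lt_measure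
    fund symm_openSquare convex_openSquare hvol
  refine ⟨(x : Fin 2 → ℝ), ?_, ?_, hxs.1, hxs.2⟩
  · rw [← span_colBasis hg]; exact x.2
  · simpa using fun h => hx0 (Subtype.ext h)

lemma det_ge_one_of_admissible (hg : g.det ≠ 0) (hadm : Admissible2 openSquare g) :
    1 ≤ |g.det| := by
  by_contra hlt
  push_neg at hlt
  obtain ⟨x, hxL, hx0, h0, h1⟩ := exists_nonzero_in_openSquare hg hlt
  have : x ∈ lattice2 g ∩ openSquare := ⟨hxL, h0, h1⟩
  rw [hadm] at this
  exact hx0 this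

end Mink

/-! ### Unimodular changes of basis -/

lemma cast_mulVec (U : Matrix (Fin 2) (Fin 2) ℤ) (m : Fin 2 → ℤ) :
    (U.map (fun z : ℤ => (z : ℝ))).mulVec (fun i => (m i : ℝ))
      = fun i => ((U.mulVec m) i : ℝ) := by
  funext i
  simp only [Matrix.mulVec, dotProduct, Fin.sum_univ_two, Matrix.map_apply]
  push_cast
  ring

lemma lattice2_mul_unimodular (g : Matrix (Fin 2) (Fin 2) ℝ) (U : Matrix (Fin 2) (Fin 2) ℤ)
    (hU : U.det = 1 ∨ U.det = -1) :
    lattice2 (g * U.map (fun z : ℤ => (z : ℝ))) = lattice2 g := by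
  obtain ⟨V, hUV⟩ : ∃ V : Matrix (Fin 2) (Fin 2) ℤ, U * V = 1 := by
    refine ⟨U.det • U.adjugate, ?_⟩
    rw [Matrix.mul_smul, Matrix.mul_adjugate, smul_smul]
    rcases hU with h | h <;> rw [h] <;> norm_num
  ext x
  constructor
  · rintro ⟨m, rfl⟩
    refine ⟨U.mulVec m, ?_⟩
    rw [← cast_mulVec, Matrix.mulVec_mulVec]
  · rintro ⟨m, rfl⟩
    refine ⟨V.mulVec m, ?_⟩
    rw [← Matrix.mulVec_mulVec, cast_mulVec, Matrix.mulVec_mulVec, hUV, Matrix.one_mulVec]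

lemma lattice2_mul_left (A g : Matrix (Fin 2) (Fin 2) ℝ) :
    lattice2 (A * g) = (fun x => A.mulVec x) '' lattice2 g := by
  ext x
  constructor
  · rintro ⟨m, rfl⟩
    exact ⟨g.mulVec _, ⟨m, rfl⟩, Matrix.mulVec_mulVec _ _ _⟩
  · rintro ⟨y, ⟨m, rfl⟩, rfl⟩
    exact ⟨m, Matrix.mulVec_mulVec _ _ _⟩

lemma exists_unimodular_col (a b : ℤ) (hab : Int.gcd a b = 1) :
    ∃ U : Matrix (Fin 2) (Fin 2) ℤ, U.det = 1 ∧ U 0 0 = a ∧ U 1 0 = b := by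
  have hg := Int.gcd_eq_gcd_ab a b
  rw [hab] at hg
  refine ⟨!![a, -(Int.gcdB a b); b, Int.gcdA a b], ?_, by norm_num, by norm_num⟩
  rw [Matrix.det_fin_two_of]
  push_cast at hg
  linarith [hg]

/-! ### The core structure lemma -/

lemma coreAux (β γ δ : ℝ) (hβ1 : |β| ≤ 1) (hδγ : δ - β * γ = 1)
    (hadm : ∀ x : Fin 2 → ℝ,
      (∃ a b : ℤ, x 0 = a + b * γ ∧ x 1 = a * β + b * δ) → |x 0| < 1 → |x 1| < 1 → x = 0) :
    ∃ t : ℝ,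
      {x : Fin 2 → ℝ | ∃ a b : ℤ, x 0 = a + b * γ ∧ x 1 = a * β + b * δ}
          = lattice2 !![1, t; 0, 1] ∨
      {x : Fin 2 → ℝ | ∃ a b : ℤ, x 0 = a + b * γ ∧ x 1 = a * β + b * δ}
          = lattice2 !![1, 0; t, 1] := by
  by_cases hβ0 : β = 0
  · have hδ1 : δ = 1 := by rw [← hδγ, hβ0]; ring
    subst hβ0; subst hδ1
    refine ⟨γ, Or.inl ?_⟩
    ext x
    rw [Set.mem_setOf_eq, mem_lattice2]
    simp only [Matrix.of_apply, Matrix.cons_val_zero, Matrix.cons_val_one, Matrix.head_cons]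
    constructor
    · rintro ⟨a, b, e0, e1⟩
      exact ⟨a, b, by rw [e0]; ring, by rw [e1]; ring⟩
    · rintro ⟨a, b, e0, e1⟩
      exact ⟨a, b, by rw [e0]; ring, by rw [e1]; ring⟩
  · -- show γ is an integer
    obtain ⟨n, hn⟩ : ∃ n : ℤ, γ = (n : ℝ) := by
      by_contra hng
      push_neg at hng
      rcases lt_or_gt_of_ne hβ0 with hβneg | hβpos
      · -- β < 0 : use s = γ - ⌊γ⌋ ∈ (0,1)
        obtain ⟨s, hsdef⟩ : ∃ s : ℝ, s = γ - (⌊γ⌋ : ℝ) := ⟨_, rfl⟩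
        have hs0 : 0 < s := by
          have h1 := Int.floor_le γ
          have h2 : γ ≠ (⌊γ⌋ : ℝ) := hng ⌊γ⌋
          have : (⌊γ⌋ : ℝ) < γ := lt_of_le_of_ne h1 (fun hh => h2 hh.symm)
          linarith
        have hs1 : s < 1 := by
          have := Int.lt_floor_add_one γ
          linarith
        have hβge : -1 ≤ β := (abs_le.mp hβ1).1
        have hm : (∃ a b : ℤ, (![s, 1 + β * s] : Fin 2 → ℝ) 0 = a + b * γ ∧
            (![s, 1 + β * s] : Fin 2 → ℝ) 1 = a * β + b * δ) := by
          refine ⟨-⌊γ⌋, 1, ?_, ?_⟩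
          · simp only [Matrix.cons_val_zero]
            rw [hsdef]; push_cast; ring
          · simp only [Matrix.cons_val_one, Matrix.head_cons]
            rw [hsdef]; push_cast; linear_combination -hδγ
        have h0' : |(![s, 1 + β * s] : Fin 2 → ℝ) 0| < 1 := by
          simp only [Matrix.cons_val_zero, abs_lt]
          constructor <;> linarith
        have h1' : |(![s, 1 + β * s] : Fin 2 → ℝ) 1| < 1 := by
          simp only [Matrix.cons_val_one, Matrix.head_cons, Matrix.cons_val_zero, abs_lt]
          constructor <;> nlinarith
        have hz := hadm _ hm h0' h1'
        have : s = 0 := by simpa using congrFun hz 0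
        linarith
      · -- β > 0 : use s = γ - ⌈γ⌉ ∈ (-1,0)
        obtain ⟨s, hsdef⟩ : ∃ s : ℝ, s = γ - (⌈γ⌉ : ℝ) := ⟨_, rfl⟩
        have hs0 : s < 0 := by
          have h1 := Int.le_ceil γ
          have h2 : γ ≠ (⌈γ⌉ : ℝ) := hng ⌈γ⌉
          have : γ < (⌈γ⌉ : ℝ) := lt_of_le_of_ne h1 h2
          linarith
        have hs1 : -1 < s := by
          have := Int.ceil_lt_add_one γ
          linarith
        have hβle : β ≤ 1 := (abs_le.mp hβ1).2
        have hm : (∃ a b : ℤ, (![s, 1 + β * s] : Fin 2 → ℝ) 0 = a + b * γ ∧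
            (![s, 1 + β * s] : Fin 2 → ℝ) 1 = a * β + b * δ) := by
          refine ⟨-⌈γ⌉, 1, ?_, ?_⟩
          · simp only [Matrix.cons_val_zero]
            rw [hsdef]; push_cast; ring
          · simp only [Matrix.cons_val_one, Matrix.head_cons]
            rw [hsdef]; push_cast; linear_combination -hδγ
        have h0' : |(![s, 1 + β * s] : Fin 2 → ℝ) 0| < 1 := by
          simp only [Matrix.cons_val_zero, abs_lt]
          constructor <;> linarith
        have h1' : |(![s, 1 + β * s] : Fin 2 → ℝ) 1| < 1 := by
          simp only [Matrix.cons_val_one, Matrix.head_cons, Matrix.cons_val_zero, abs_lt]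
          constructor <;> nlinarith
        have hz := hadm _ hm h0' h1'
        have : s = 0 := by simpa using congrFun hz 0
        linarith
    -- now γ = n, so the lattice is the vertical shear by β
    have hδn : δ = 1 + β * n := by rw [← hδγ, hn]; ring
    refine ⟨β, Or.inr ?_⟩
    ext x
    rw [Set.mem_setOf_eq, mem_lattice2]
    simp only [Matrix.of_apply, Matrix.cons_val_zero, Matrix.cons_val_one, Matrix.head_cons]
    constructor
    · rintro ⟨a, b, e0, e1⟩
      refine ⟨a + b * n, b, ?_, ?_⟩
      · rw [e0, hn]; push_cast; ring
      · rw [e1]; push_cast; linear_combination (b : ℝ) * hδn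
    · rintro ⟨a, b, e0, e1⟩
      refine ⟨a - b * n, b, ?_, ?_⟩
      · rw [e0, hn]; push_cast; ring
      · rw [e1]; push_cast; linear_combination (-(b : ℝ)) * hδn

lemma core {h : Matrix (Fin 2) (Fin 2) ℝ} (hdet : h.det = 1 ∨ h.det = -1)
    (hadm : Admissible2 openSquare h) (h00 : h 0 0 = 1) (h10 : |h 1 0| ≤ 1) :
    ∃ t : ℝ, lattice2 h = lattice2 !![1, t; 0, 1] ∨ lattice2 h = lattice2 !![1, 0; t, 1] := by
  obtain ⟨ζ, hζ2, hζR⟩ : ∃ ζ : ℤ, ζ * ζ = 1 ∧ (ζ : ℝ) = h.det := by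
    rcases hdet with hd | hd
    · exact ⟨1, by norm_num, by rw [hd]; norm_num⟩
    · exact ⟨-1, by norm_num, by rw [hd]; norm_num⟩
  have hζζ : (ζ : ℝ) * (ζ : ℝ) = 1 := by exact_mod_cast congrArg (fun z : ℤ => (z : ℝ)) hζ2
  have hdet2 : h.det = h 1 1 - h 0 1 * h 1 0 := by
    rw [Matrix.det_fin_two, h00]; ring
  have hmem : lattice2 h = {x : Fin 2 → ℝ | ∃ a b : ℤ,
      x 0 = a + b * ((ζ : ℝ) * h 0 1) ∧ x 1 = a * h 1 0 + b * ((ζ : ℝ) * h 1 1)} := by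
    ext x
    rw [mem_lattice2, Set.mem_setOf_eq]
    constructor
    · rintro ⟨a, b, e0, e1⟩
      refine ⟨a, ζ * b, ?_, ?_⟩
      · rw [e0, h00]; push_cast
        linear_combination (-(h 0 1 * (b : ℝ))) * hζζ
      · rw [e1]; push_cast
        linear_combination (-(h 1 1 * (b : ℝ))) * hζζ
    · rintro ⟨a, b, e0, e1⟩
      refine ⟨a, ζ * b, ?_, ?_⟩
      · rw [e0, h00]; push_cast; ring
      · rw [e1]; push_cast; ring
  have hδγ : (ζ : ℝ) * h 1 1 - h 1 0 * ((ζ : ℝ) * h 0 1) = 1 := by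
    linear_combination (-(ζ : ℝ)) * hdet2 - (ζ : ℝ) * hζR + hζζ
  have hadm' : ∀ x : Fin 2 → ℝ,
      (∃ a b : ℤ, x 0 = a + b * ((ζ : ℝ) * h 0 1) ∧
        x 1 = a * h 1 0 + b * ((ζ : ℝ) * h 1 1)) → |x 0| < 1 → |x 1| < 1 → x = 0 := by
    intro x hx h0 h1
    exact admissible_iff.mp hadm x (hmem ▸ Set.mem_setOf_eq ▸ hx) h0 h1
  obtain ⟨t, ht⟩ := coreAux (h 1 0) ((ζ : ℝ) * h 0 1) ((ζ : ℝ) * h 1 1) h10 hδγ hadm'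
  exact ⟨t, by rwa [hmem]⟩


/-! ### Swapped version of the core lemma -/

def swapM : Matrix (Fin 2) (Fin 2) ℝ := !![0, 1; 1, 0]

lemma swapM_sq : swapM * swapM = 1 := by
  ext i j
  fin_cases i <;> fin_cases j <;>
    simp [swapM, Matrix.mul_apply, Fin.sum_univ_two, Matrix.one_apply]

lemma core' {h : Matrix (Fin 2) (Fin 2) ℝ} (hdet : h.det = 1 ∨ h.det = -1)
    (hadm : Admissible2 openSquare h) (h10 : h 1 0 = 1) (h00 : |h 0 0| ≤ 1) :
    ∃ t : ℝ, lattice2 h = lattice2 !![1, t; 0, 1] ∨ lattice2 h = lattice2 !![1, 0; t, 1] := by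
  have hswapdet : swapM.det = -1 := by rw [swapM, Matrix.det_fin_two_of]; norm_num
  have e0 : ∀ j, (swapM * h) 0 j = h 1 j := by
    intro j; simp [swapM, Matrix.mul_apply, Fin.sum_univ_two]
  have e1 : ∀ j, (swapM * h) 1 j = h 0 j := by
    intro j; simp [swapM, Matrix.mul_apply, Fin.sum_univ_two]
  have hdet' : (swapM * h).det = 1 ∨ (swapM * h).det = -1 := by
    rw [Matrix.det_mul, hswapdet]
    rcases hdet with hd | hd <;> rw [hd] <;> norm_num
  have hadm' : Admissible2 openSquare (swapM * h) := by
    rw [admissible_iff]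
    intro x hx hx0 hx1
    obtain ⟨a, b, f0, f1⟩ := mem_lattice2.mp hx
    rw [e0, e0] at f0
    rw [e1, e1] at f1
    have hy : (![x 1, x 0] : Fin 2 → ℝ) ∈ lattice2 h := by
      rw [mem_lattice2]
      exact ⟨a, b, by simpa using f1, by simpa using f0⟩
    have hz := admissible_iff.mp hadm _ hy (by simpa using hx1) (by simpa using hx0)
    have z0 : x 1 = 0 := by simpa using congrFun hz 0
    have z1 : x 0 = 0 := by simpa using congrFun hz 1
    exact vec2_ext (by simpa using z1) (by simpa using z0)
  obtain ⟨t, hcase⟩ := core hdet' hadm' (by rw [e0]; exact h10) (by rw [e1]; exact h00)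
  have hh : lattice2 h = (fun x => swapM.mulVec x) '' lattice2 (swapM * h) := by
    rw [← lattice2_mul_left, ← Matrix.mul_assoc, swapM_sq, Matrix.one_mul]
  have swapZcast : (!![0, 1; 1, 0] : Matrix (Fin 2) (Fin 2) ℤ).map (fun z : ℤ => (z : ℝ))
      = !![0, 1; 1, 0] := by
    ext i j
    fin_cases i <;> fin_cases j <;> simp
  have swapZdet : (!![0, 1; 1, 0] : Matrix (Fin 2) (Fin 2) ℤ).det = 1 ∨
      (!![0, 1; 1, 0] : Matrix (Fin 2) (Fin 2) ℤ).det = -1 := by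
    rw [Matrix.det_fin_two_of]; norm_num
  rcases hcase with hc | hc
  · refine ⟨t, Or.inr ?_⟩
    have m1 : swapM * !![1, t; 0, 1] = !![1, 0; t, 1] * !![0, 1; 1, 0] := by
      ext i j
      fin_cases i <;> fin_cases j <;>
        simp [swapM, Matrix.mul_apply, Fin.sum_univ_two]
    calc lattice2 h = (fun x => swapM.mulVec x) '' lattice2 (swapM * h) := hh
      _ = (fun x => swapM.mulVec x) '' lattice2 !![1, t; 0, 1] := by rw [hc]
      _ = lattice2 (swapM * !![1, t; 0, 1]) := (lattice2_mul_left _ _).symm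
      _ = lattice2 (!![1, 0; t, 1] * !![0, 1; 1, 0]) := by rw [m1]
      _ = lattice2 !![1, 0; t, 1] := by
          rw [← swapZcast]; exact lattice2_mul_unimodular _ _ swapZdet
  · refine ⟨t, Or.inl ?_⟩
    have m1 : swapM * !![1, 0; t, 1] = !![1, t; 0, 1] * !![0, 1; 1, 0] := by
      ext i j
      fin_cases i <;> fin_cases j <;>
        simp [swapM, Matrix.mul_apply, Fin.sum_univ_two]
    calc lattice2 h = (fun x => swapM.mulVec x) '' lattice2 (swapM * h) := hh
      _ = (fun x => swapM.mulVec x) '' lattice2 !![1, 0; t, 1] := by rw [hc]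
      _ = lattice2 (swapM * !![1, 0; t, 1]) := (lattice2_mul_left _ _).symm
      _ = lattice2 (!![1, t; 0, 1] * !![0, 1; 1, 0]) := by rw [m1]
      _ = lattice2 !![1, t; 0, 1] := by
          rw [← swapZcast]; exact lattice2_mul_unimodular _ _ swapZdet

/-! ### From a primitive vector on the boundary to the conclusion -/

lemma finish_col {g : Matrix (Fin 2) (Fin 2) ℝ} (hadm : Admissible2 openSquare g)
    (hdet1 : |g.det| = 1) (a b : ℤ) (hcop : Int.gcd a b = 1)
    (hcase : (g 0 0 * a + g 0 1 * b = 1 ∧ |g 1 0 * a + g 1 1 * b| ≤ 1) ∨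
             (g 1 0 * a + g 1 1 * b = 1 ∧ |g 0 0 * a + g 0 1 * b| ≤ 1)) :
    ∃ t : ℝ, lattice2 g = lattice2 !![1, t; 0, 1] ∨ lattice2 g = lattice2 !![1, 0; t, 1] := by
  obtain ⟨U, hUdet, hU00, hU10⟩ := exists_unimodular_col a b hcop
  set h := g * U.map (fun z : ℤ => (z : ℝ)) with hhdef
  have hlat : lattice2 h = lattice2 g := lattice2_mul_unimodular g U (Or.inl hUdet)
  have hdm : (U.map (fun z : ℤ => (z : ℝ))).det = ((U.det : ℤ) : ℝ) := by
    rw [Matrix.det_fin_two, Matrix.det_fin_two]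
    simp only [Matrix.map_apply]
    push_cast
    ring
  have hdeth : h.det = g.det := by
    rw [hhdef, Matrix.det_mul, hdm, hUdet]
    norm_num
  have hdetor : h.det = 1 ∨ h.det = -1 := by
    rw [hdeth]
    rcases abs_eq (by norm_num : (0:ℝ) ≤ 1) |>.mp hdet1 with hd | hd
    · exact Or.inl hd
    · exact Or.inr hd
  have hadmh : Admissible2 openSquare h := by
    unfold Admissible2 at hadm ⊢
    rw [hlat]
    exact hadm
  have hcol : ∀ i, h i 0 = g i 0 * a + g i 1 * b := by
    intro i
    rw [hhdef]
    simp [Matrix.mul_apply, Fin.sum_univ_two, Matrix.map_apply, hU00, hU10]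
  rcases hcase with ⟨hc1, hc2⟩ | ⟨hc1, hc2⟩
  · obtain ⟨t, ht⟩ := core hdetor hadmh (by rw [hcol 0]; exact hc1) (by rw [hcol 1]; exact hc2)
    exact ⟨t, by rwa [hlat] at ht⟩
  · obtain ⟨t, ht⟩ := core' hdetor hadmh (by rw [hcol 1]; exact hc1) (by rw [hcol 0]; exact hc2)
    exact ⟨t, by rwa [hlat] at ht⟩

/-! ### The main reduction -/

lemma main_forward {g : Matrix (Fin 2) (Fin 2) ℝ} (hg : g.det ≠ 0) (hdet1 : |g.det| = 1)
    (hadm : Admissible2 openSquare g) :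
    ∃ t : ℝ, lattice2 g = lattice2 !![1, t; 0, 1] ∨ lattice2 g = lattice2 !![1, 0; t, 1] := by
  obtain ⟨x, hxL, hx0, hxle0, hxle1⟩ := exists_nonzero_in_closedSquare hg (le_of_eq hdet1)
  obtain ⟨a0, b0, e0, e1⟩ := mem_lattice2.mp hxL
  have hm0 : a0 ≠ 0 ∨ b0 ≠ 0 := by
    by_contra hc
    push_neg at hc
    obtain ⟨rfl, rfl⟩ := hc
    apply hx0
    apply vec2_ext <;> simp [e0, e1]
  have hdpos : 0 < Int.gcd a0 b0 := Int.gcd_pos_iff.mpr hm0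
  set d : ℕ := Int.gcd a0 b0 with hddef
  set a : ℤ := a0 / d with hadef
  set b : ℤ := b0 / d with hbdef
  have hcop : Int.gcd a b = 1 := Int.gcd_div_gcd_div_gcd hdpos
  have ha0 : (d : ℤ) * a = a0 := Int.mul_ediv_cancel' (Int.gcd_dvd_left a0 b0)
  have hb0 : (d : ℤ) * b = b0 := Int.mul_ediv_cancel' (Int.gcd_dvd_right a0 b0)
  have hd1 : (1 : ℝ) ≤ (d : ℝ) := by exact_mod_cast hdpos
  -- the primitive point
  set p0 : ℝ := g 0 0 * a + g 0 1 * b with hp0def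
  set p1 : ℝ := g 1 0 * a + g 1 1 * b with hp1def
  have hx0' : x 0 = d * p0 := by
    rw [e0, ← ha0, ← hb0, hp0def]; push_cast; ring
  have hx1' : x 1 = d * p1 := by
    rw [e1, ← ha0, ← hb0, hp1def]; push_cast; ring
  have hple0 : |p0| ≤ 1 := by
    have : |x 0| = (d : ℝ) * |p0| := by
      rw [hx0', abs_mul, abs_of_nonneg (by positivity : (0:ℝ) ≤ (d:ℝ))]
    nlinarith [abs_nonneg p0, abs_nonneg (x 0)]
  have hple1 : |p1| ≤ 1 := by
    have : |x 1| = (d : ℝ) * |p1| := by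
      rw [hx1', abs_mul, abs_of_nonneg (by positivity : (0:ℝ) ≤ (d:ℝ))]
    nlinarith [abs_nonneg p1, abs_nonneg (x 1)]
  have hpmem : (![p0, p1] : Fin 2 → ℝ) ∈ lattice2 g :=
    mem_lattice2.mpr ⟨a, b, by simpa using hp0def, by simpa using hp1def⟩
  have hpne : ¬(p0 = 0 ∧ p1 = 0) := by
    rintro ⟨hz0, hz1⟩
    apply hx0
    apply vec2_ext <;> simp [hx0', hx1', hz0, hz1]
  have hone : |p0| = 1 ∨ |p1| = 1 := by
    by_contra hc
    push_neg at hc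
    have hlt0 : |p0| < 1 := lt_of_le_of_ne hple0 hc.1
    have hlt1 : |p1| < 1 := lt_of_le_of_ne hple1 hc.2
    have hz := admissible_iff.mp hadm _ hpmem (by simpa using hlt0) (by simpa using hlt1)
    exact hpne ⟨by simpa using congrFun hz 0, by simpa using congrFun hz 1⟩
  have hnegcop : Int.gcd (-a) (-b) = 1 := by
    rw [Int.neg_gcd, Int.gcd_neg]
    exact hcop
  rcases hone with h1 | h1
  · rcases (abs_eq (by norm_num : (0:ℝ) ≤ 1)).mp h1 with hp | hp
    · exact finish_col hadm hdet1 a b hcop (Or.inl ⟨by rw [← hp0def]; exact hp,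
        by rw [← hp1def]; exact hple1⟩)
    · refine finish_col hadm hdet1 (-a) (-b) hnegcop (Or.inl ⟨?_, ?_⟩)
      · push_cast
        rw [hp0def] at hp
        linarith
      · push_cast
        rw [show g 1 0 * (-(a:ℝ)) + g 1 1 * (-(b:ℝ)) = -(g 1 0 * a + g 1 1 * b) by ring,
          abs_neg, ← hp1def]
        exact hple1
  · rcases (abs_eq (by norm_num : (0:ℝ) ≤ 1)).mp h1 with hp | hp
    · exact finish_col hadm hdet1 a b hcop (Or.inr ⟨by rw [← hp1def]; exact hp,
        by rw [← hp0def]; exact hple0⟩)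
    · refine finish_col hadm hdet1 (-a) (-b) hnegcop (Or.inr ⟨?_, ?_⟩)
      · push_cast
        rw [hp1def] at hp
        linarith
      · push_cast
        rw [show g 0 0 * (-(a:ℝ)) + g 0 1 * (-(b:ℝ)) = -(g 0 0 * a + g 0 1 * b) by ring,
          abs_neg, ← hp0def]
        exact hple0


end SqAux

/-- For the open square `S = (-1,1)²`: `Δ(S) = 1`, and a lattice of covolume 1 is
`S`-admissible iff it is a horizontal or vertical shear of `ℤ²`. -/
theorem critical_locus_of_square :
    critDet2 openSquare = 1 ∧
    ∀ g : Matrix (Fin 2) (Fin 2) ℝ, g.det ≠ 0 → |g.det| = 1 →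
      (Admissible2 openSquare g ↔
        ∃ t : ℝ, lattice2 g = lattice2 !![1, t; 0, 1] ∨
          lattice2 g = lattice2 !![1, 0; t, 1]) := by
  have hmem1 : (1 : ℝ) ∈ {d | ∃ g : Matrix (Fin 2) (Fin 2) ℝ,
      g.det ≠ 0 ∧ Admissible2 openSquare g ∧ d = |g.det|} := by
    refine ⟨!![1, 0; 0, 1], ?_, SqAux.shear1_adm 0, ?_⟩
    · rw [Matrix.det_fin_two_of]; norm_num
    · rw [Matrix.det_fin_two_of]; norm_num
  have hlb : ∀ d ∈ {d | ∃ g : Matrix (Fin 2) (Fin 2) ℝ,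
      g.det ≠ 0 ∧ Admissible2 openSquare g ∧ d = |g.det|}, (1 : ℝ) ≤ d := by
    rintro d ⟨g, hg, ha, rfl⟩
    exact SqAux.det_ge_one_of_admissible hg ha
  constructor
  · exact le_antisymm (csInf_le ⟨1, hlb⟩ hmem1) (le_csInf ⟨1, hmem1⟩ hlb)
  · intro g hg hdet1
    constructor
    · intro hadm
      exact SqAux.main_forward hg hdet1 hadm
    · rintro ⟨t, hc | hc⟩ <;> unfold Admissible2 <;> rw [hc]
      · exact SqAux.shear1_adm t
      · exact SqAux.shear2_adm t
end
end

section
/- Let K be a bounded open convex domain in ℝ² symmetric about the origin, with boundary C, and suppose points p₁, p₂ ∈ C satisfy p₃ := p₁ + p₂ ∈ C. Then the lattice generated by p₁ and p₂ is K-admissible, i.e. contains no nonzero point of K. -/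
open MeasureTheory

noncomputable section

theorem aux_key {E : Type*} [AddCommGroup E] [Module ℝ E] (F : E → ℝ)
    (hadd : ∀ x y, F (x + y) ≤ F x + F y)
    (hsmul : ∀ (r : ℝ) (x), 0 ≤ r → F (r • x) = r * F x)
    (hneg : ∀ x, F (-x) = F x)
    (a b : E) (ha : F a = 1) (hb : F b = 1) (hab : F (a + b) = 1)
    (m n : ℤ) (hmn : ¬(m = 0 ∧ n = 0)) : 1 ≤ F (m • a + n • b) := by
  have rev : ∀ x u : E, F x - F (x - u) ≤ F u := by
    intro x u
    have := hadd u (x - u)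
    have e : u + (x - u) = x := by abel
    rw [e] at this; linarith
  have cast_smul : ∀ (k : ℤ) (x : E), k • x = (k : ℝ) • x := fun k x =>
    (Int.cast_smul_eq_zsmul ℝ k x).symm
  -- main claim for positive first coefficient, real formulation
  have hpos : ∀ m n : ℤ, 0 < m → 1 ≤ F ((m : ℝ) • a + (n : ℝ) • b) := by
    intro m n hm
    set u := (m : ℝ) • a + (n : ℝ) • b with hu
    have hm1 : (1 : ℝ) ≤ (m : ℝ) := by exact_mod_cast hm
    rcases le_or_gt n 0 with hn | hn
    · have hn' : (n : ℝ) ≤ 0 := by exact_mod_cast hn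
      have e1 : ((m : ℝ) - n) • a - u = (-(n : ℝ)) • (a + b) := by rw [hu]; module
      have f1 : F (((m : ℝ) - n) • a) = (m : ℝ) - n := by
        rw [hsmul _ _ (by linarith), ha, mul_one]
      have f2 : F ((-(n : ℝ)) • (a + b)) = -(n : ℝ) := by
        rw [hsmul _ _ (by linarith), hab, mul_one]
      have := rev (((m : ℝ) - n) • a) u
      rw [e1, f1, f2] at this; linarith
    · have hn1 : (1 : ℝ) ≤ (n : ℝ) := by exact_mod_cast hn
      rcases le_or_gt (n : ℝ) (m : ℝ) with h | h
      · have e1 : (m : ℝ) • (a + b) - u = ((m : ℝ) - n) • b := by rw [hu]; module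
        have f1 : F ((m : ℝ) • (a + b)) = (m : ℝ) := by
          rw [hsmul _ _ (by linarith), hab, mul_one]
        have f2 : F (((m : ℝ) - n) • b) = (m : ℝ) - n := by
          rw [hsmul _ _ (by linarith), hb, mul_one]
        have := rev ((m : ℝ) • (a + b)) u
        rw [e1, f1, f2] at this; linarith
      · have e1 : (n : ℝ) • (a + b) - u = ((n : ℝ) - m) • a := by rw [hu]; module
        have f1 : F ((n : ℝ) • (a + b)) = (n : ℝ) := by
          rw [hsmul _ _ (by linarith), hab, mul_one]
        have f2 : F (((n : ℝ) - m) • a) = (n : ℝ) - m := by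
          rw [hsmul _ _ (by linarith), ha, mul_one]
        have := rev ((n : ℝ) • (a + b)) u
        rw [e1, f1, f2] at this; linarith
  rw [cast_smul, cast_smul]
  rcases lt_trichotomy m 0 with hm | hm | hm
  · have e : -((m : ℝ) • a + (n : ℝ) • b) = ((-m : ℤ) : ℝ) • a + ((-n : ℤ) : ℝ) • b := by
      push_cast; module
    rw [← hneg, e]
    exact hpos (-m) (-n) (by omega)
  · subst hm
    have hn : n ≠ 0 := by tauto
    have e : ((0 : ℤ) : ℝ) • a + (n : ℝ) • b = (n : ℝ) • b := by
      push_cast; module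
    rw [e]
    rcases lt_trichotomy n 0 with h | h | h
    · have e2 : (n : ℝ) • b = -(((-n : ℤ) : ℝ) • b) := by push_cast; module
      rw [e2, hneg, hsmul _ _ (by exact_mod_cast (by omega : (0:ℤ) ≤ -n)), hb, mul_one]
      exact_mod_cast (by omega : (1:ℤ) ≤ -n)
    · exact absurd h hn
    · rw [hsmul _ _ (by exact_mod_cast h.le), hb, mul_one]
      exact_mod_cast h
  · exact hpos m n hm

/-- If `p₁, p₂` and `p₁ + p₂` lie on the boundary of a bounded open convex symmetric
domain `K ⊂ ℝ²`, then the lattice generated by `p₁` and `p₂` contains no nonzero point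
of `K`. -/
theorem lattice_from_boundary_points_admissible (K : Set (Fin 2 → ℝ))
    (hopen : IsOpen K) (hbdd : Bornology.IsBounded K) (hconv : Convex ℝ K)
    (hsym : ∀ x ∈ K, -x ∈ K) (p₁ p₂ : Fin 2 → ℝ)
    (hp₁ : p₁ ∈ frontier K) (hp₂ : p₂ ∈ frontier K) (hp₃ : p₁ + p₂ ∈ frontier K) :
    ∀ m n : ℤ, m • p₁ + n • p₂ ∈ K → m • p₁ + n • p₂ = 0 := by
  intro m n h
  rcases Classical.em (m = 0 ∧ n = 0) with ⟨hm, hn⟩ | hmn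
  · subst hm; subst hn; simp
  -- 0 ∈ K
  have h0 : (0 : Fin 2 → ℝ) ∈ K := by
    have := hconv h (hsym _ h) (by norm_num : (0:ℝ) ≤ 1/2) (by norm_num : (0:ℝ) ≤ 1/2)
      (by norm_num)
    have e : (1/2 : ℝ) • (m • p₁ + n • p₂) + (1/2 : ℝ) • (-(m • p₁ + n • p₂))
        = (0 : Fin 2 → ℝ) := by module
    rwa [e] at this
  have hnhds : K ∈ nhds (0 : Fin 2 → ℝ) := hopen.mem_nhds h0
  have habs : Absorbent ℝ K := absorbent_nhds_zero hnhds
  have key := aux_key (gauge K) (gauge_add_le hconv habs)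
    (fun r x hr => by rw [gauge_smul_of_nonneg hr, smul_eq_mul])
    (gauge_neg hsym) p₁ p₂
    ((gauge_eq_one_iff_mem_frontier hconv hnhds).2 hp₁)
    ((gauge_eq_one_iff_mem_frontier hconv hnhds).2 hp₂)
    ((gauge_eq_one_iff_mem_frontier hconv hnhds).2 hp₃) m n hmn
  have hlt : gauge K (m • p₁ + n • p₂) < 1 := gauge_lt_one_of_mem_of_isOpen hopen h
  linarith
end
end

section
/- If H ⊂ K are bounded open convex symmetric domains in ℝ² and there exists a lattice Λ₀ which is H-critical and K-admissible, then Δ(H) = Δ(K) and the critical locus of K equals the set of H-critical lattices that are K-admissible: 𝓛(K) = { Λ ∈ 𝓛(H) : Λ ∩ K = {0} }. -/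
open MeasureTheory

noncomputable section

lemma zero_mem_lattice2 (g : Matrix (Fin 2) (Fin 2) ℝ) : (0 : Fin 2 → ℝ) ∈ lattice2 g := by
  refine ⟨0, ?_⟩; rw [show (fun i : Fin 2 => (((0 : Fin 2 → ℤ) i : ℝ))) = (0 : Fin 2 → ℝ) by funext i; simp, Matrix.mulVec_zero]

/-- A `K`-admissible lattice is `H`-admissible when `H ⊆ K` and `0 ∈ H`. -/
lemma admissible2_of_subset {H K : Set (Fin 2 → ℝ)} (hHK : H ⊆ K)
    (hH0 : (0 : Fin 2 → ℝ) ∈ H) {g : Matrix (Fin 2) (Fin 2) ℝ}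
    (h : Admissible2 K g) : Admissible2 H g := by
  apply Set.Subset.antisymm
  · intro x hx
    have : x ∈ lattice2 g ∩ K := ⟨hx.1, hHK hx.2⟩
    rw [h] at this
    exact this
  · intro x hx
    rw [Set.mem_singleton_iff] at hx
    subst hx
    exact ⟨zero_mem_lattice2 g, hH0⟩

/-- If `H ⊆ K` and some `H`-critical lattice is `K`-admissible, then `Δ(H) = Δ(K)` and
`𝓛(K)` consists exactly of the `K`-admissible members of `𝓛(H)`. -/
theorem critical_locus_of_enlargement (H K : Set (Fin 2 → ℝ))
    (hHopen : IsOpen H) (hHbdd : Bornology.IsBounded H) (hHconv : Convex ℝ H)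
    (hHsym : ∀ x ∈ H, -x ∈ H) (hH0 : (0 : Fin 2 → ℝ) ∈ H)
    (hKopen : IsOpen K) (hKbdd : Bornology.IsBounded K) (hKconv : Convex ℝ K)
    (hKsym : ∀ x ∈ K, -x ∈ K)
    (hHK : H ⊆ K)
    (hex : ∃ g₀ : Matrix (Fin 2) (Fin 2) ℝ, g₀.det ≠ 0 ∧
      lattice2 g₀ ∈ critLocus2 H ∧ lattice2 g₀ ∩ K = {0}) :
    critDet2 H = critDet2 K ∧
      critLocus2 K = {L ∈ critLocus2 H | L ∩ K = {0}} := by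
  obtain ⟨g₀, hg₀det, hg₀crit, hg₀K⟩ := hex
  obtain ⟨g₁, hg₁det, hg₁eq, hg₁adm, hg₁val⟩ := hg₀crit
  -- g₁ is K-admissible since lattice2 g₁ = lattice2 g₀
  have hg₁K : Admissible2 K g₁ := by
    unfold Admissible2
    rw [← hg₁eq]
    exact hg₀K
  set SH := {d | ∃ g : Matrix (Fin 2) (Fin 2) ℝ, g.det ≠ 0 ∧ Admissible2 H g ∧ d = |g.det|}
  set SK := {d | ∃ g : Matrix (Fin 2) (Fin 2) ℝ, g.det ≠ 0 ∧ Admissible2 K g ∧ d = |g.det|}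
  have hsub : SK ⊆ SH := by
    rintro d ⟨g, hgdet, hgadm, rfl⟩
    exact ⟨g, hgdet, admissible2_of_subset hHK hH0 hgadm, rfl⟩
  have hbddH : BddBelow SH := ⟨0, by rintro d ⟨g, _, _, rfl⟩; positivity⟩
  have hbddK : BddBelow SK := hbddH.mono hsub
  have hmemK : |g₁.det| ∈ SK := ⟨g₁, hg₁det, hg₁K, rfl⟩
  have hKneSH : SK.Nonempty := ⟨_, hmemK⟩
  have hdet : critDet2 H = critDet2 K := by
    apply le_antisymm
    · exact csInf_le_csInf hbddH hKneSH hsub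
    · calc critDet2 K ≤ |g₁.det| := csInf_le hbddK hmemK
        _ = critDet2 H := hg₁val
  refine ⟨hdet, ?_⟩
  ext L
  constructor
  · rintro ⟨g, hgdet, rfl, hgadm, hgval⟩
    refine ⟨⟨g, hgdet, rfl, admissible2_of_subset hHK hH0 hgadm, by rw [hdet]; exact hgval⟩, hgadm⟩
  · rintro ⟨⟨g, hgdet, rfl, hgadm, hgval⟩, hLK⟩
    exact ⟨g, hgdet, rfl, hLK, by rw [← hdet]; exact hgval⟩
end
end

section
/- If H ⊊ K are bounded open convex symmetric domains in ℝ², where H is a parallelogram (image of (-1,1)² under some g ∈ GL₂(ℝ)) with Δ(H) = V(H)/4, then Δ(H) < Δ(K); that is, a parallelogram cannot be a proper subdomain of K realizing the same critical determinant. -/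
open MeasureTheory

noncomputable section

lemma toLinearEquiv'_eq_mulVec (g : Matrix (Fin 2) (Fin 2) ℝ) (hg : Invertible g)
    (x : Fin 2 → ℝ) : (g.toLinearEquiv' hg) x = g.mulVec x := rfl

lemma key_sum (g : Matrix (Fin 2) (Fin 2) ℝ) (hg : Invertible g) (m : Fin 2 → ℤ) :
    ∑ i, m i • ((Pi.basisFun ℝ (Fin 2)).map (g.toLinearEquiv' hg)) i
      = g.mulVec (fun i => (m i : ℝ)) := by
  have hb : ∀ i, ((Pi.basisFun ℝ (Fin 2)).map (g.toLinearEquiv' hg)) i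
      = fun j => g j i := by
    intro i
    simp [Module.Basis.map_apply, Pi.basisFun_apply, toLinearEquiv'_eq_mulVec,
      Matrix.mulVec_single, Matrix.col_apply']
  simp_rw [hb]
  ext j
  simp [Matrix.mulVec, dotProduct, Finset.sum_apply, mul_comm]

lemma lattice2_eq_span (g : Matrix (Fin 2) (Fin 2) ℝ) (hg : Invertible g) :
    lattice2 g = (Submodule.span ℤ
      (Set.range ((Pi.basisFun ℝ (Fin 2)).map (g.toLinearEquiv' hg))) : Set (Fin 2 → ℝ)) := by
  ext x
  rw [SetLike.mem_coe, Submodule.mem_span_range_iff_exists_fun]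
  constructor
  · rintro ⟨m, rfl⟩
    exact ⟨m, key_sum g hg m⟩
  · rintro ⟨m, rfl⟩
    exact ⟨m, key_sum g hg m⟩

lemma minkowski_bound (K : Set (Fin 2 → ℝ)) (hKconv : Convex ℝ K)
    (hKsym : ∀ x ∈ K, -x ∈ K) (g : Matrix (Fin 2) (Fin 2) ℝ) (hg : g.det ≠ 0)
    (hadm : Admissible2 K g) : volume K ≤ ENNReal.ofReal |g.det| * 4 := by
  by_contra h
  push_neg at h
  have hinv : Invertible g := g.invertibleOfIsUnitDet (isUnit_iff_ne_zero.2 hg)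
  set b := (Pi.basisFun ℝ (Fin 2)).map (g.toLinearEquiv' hinv) with hbdef
  have fund := ZSpan.isAddFundamentalDomain' b volume
  have hvolF : volume (ZSpan.fundamentalDomain b) = ENNReal.ofReal |g.det| := by
    rw [ZSpan.volume_fundamentalDomain]
    congr 1
    rw [show (Matrix.of ⇑b) = g.transpose by
      ext i j
      simp [hbdef, Module.Basis.map_apply, Pi.basisFun_apply, toLinearEquiv'_eq_mulVec,
        Matrix.mulVec_single, Matrix.transpose_apply, Matrix.col_apply], Matrix.det_transpose]
  haveI : Countable (Submodule.span ℤ (Set.range ⇑b)).toAddSubgroup := by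
    change Countable (Submodule.span ℤ (Set.range ⇑b))
    infer_instance
  have hlt : volume (ZSpan.fundamentalDomain b) * 2 ^ Module.finrank ℝ (Fin 2 → ℝ)
      < volume K := by
    rw [hvolF]
    have : Module.finrank ℝ (Fin 2 → ℝ) = 2 := by simp
    rw [this]
    convert h using 2
    norm_num
  obtain ⟨x, hx0, hxK⟩ :=
    exists_ne_zero_mem_lattice_of_measure_mul_two_pow_lt_measure fund hKsym hKconv hlt
  have hmem : (x : Fin 2 → ℝ) ∈ lattice2 g ∩ K := by
    refine ⟨?_, hxK⟩
    rw [lattice2_eq_span g hinv]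
    exact x.2
  rw [hadm] at hmem
  exact hx0 (Subtype.ext hmem)

lemma exists_admissible (K : Set (Fin 2 → ℝ)) (hKbdd : Bornology.IsBounded K)
    (h0K : (0 : Fin 2 → ℝ) ∈ K) :
    ∃ g : Matrix (Fin 2) (Fin 2) ℝ, g.det ≠ 0 ∧ Admissible2 K g := by
  obtain ⟨R, hR⟩ := hKbdd.exists_norm_le
  have hR0 : 0 ≤ R := le_trans (norm_nonneg _) (hR 0 h0K)
  set c : ℝ := R + 1 with hc
  have hcpos : 0 < c := by positivity
  refine ⟨c • (1 : Matrix (Fin 2) (Fin 2) ℝ), ?_, ?_⟩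
  · rw [Matrix.det_smul, Matrix.det_one]
    simp only [Fintype.card_fin, mul_one]
    positivity
  · ext x
    simp only [Set.mem_inter_iff, Set.mem_singleton_iff]
    constructor
    · rintro ⟨⟨m, rfl⟩, hxK⟩
      have hmv : ∀ v : Fin 2 → ℝ, (c • (1 : Matrix (Fin 2) (Fin 2) ℝ)).mulVec v = c • v := by
        intro v
        rw [Matrix.smul_mulVec, Matrix.one_mulVec]
      rw [hmv] at hxK ⊢
      have hm0 : ∀ i, m i = 0 := by
        intro i
        by_contra hmi
        have h1 : (1 : ℝ) ≤ |(m i : ℝ)| := by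
          exact_mod_cast Int.one_le_abs hmi
        have h2 : |c * (m i : ℝ)| ≤ R := by
          have := (norm_le_pi_norm (c • fun i => ((m i : ℝ))) i).trans (hR _ hxK)
          simpa [Real.norm_eq_abs, abs_mul] using this
        have : c ≤ R := by
          calc c = c * 1 := by ring
          _ ≤ c * |(m i : ℝ)| := by nlinarith
          _ = |c * (m i : ℝ)| := by rw [abs_mul, abs_of_pos hcpos]
          _ ≤ R := h2
        linarith
      have : (fun i => ((m i : ℝ))) = 0 := by
        ext i; simp [hm0 i]
      rw [this, smul_zero]
    · rintro rfl
      refine ⟨⟨0, ?_⟩, h0K⟩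
      have : (fun i : Fin 2 => (((0 : Fin 2 → ℤ) i : ℝ))) = (0 : Fin 2 → ℝ) := by ext i; simp
      rw [this, Matrix.mulVec_zero]

lemma volume_lt_volume (H K : Set (Fin 2 → ℝ)) (hHopen : IsOpen H) (hHconv : Convex ℝ H)
    (hH0 : H.Nonempty) (hKopen : IsOpen K) (hKbdd : Bornology.IsBounded K)
    (hHK : H ⊆ K) (hne : H ≠ K) : volume H < volume K := by
  obtain ⟨z, hzK, hzH⟩ := Set.exists_of_ssubset (HasSubset.Subset.ssubset_of_ne hHK hne)
  obtain ⟨f, hf⟩ := geometric_hahn_banach_open_point hHconv hHopen hzH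
  obtain ⟨y0, hy0⟩ := hH0
  have hfy : f y0 < f z := hf y0 hy0
  obtain ⟨ε, hε, hball⟩ := Metric.isOpen_iff.1 hKopen z hzK
  set v : Fin 2 → ℝ := z - y0 with hv
  have hfv : 0 < f v := by
    rw [hv, map_sub]; linarith
  have hvne : v ≠ 0 := fun h => by simp [h] at hfv
  have hvnorm : 0 < ‖v‖ := norm_pos_iff.2 hvne
  set U : Set (Fin 2 → ℝ) := Metric.ball z ε ∩ {y | f z < f y} with hU
  have hUopen : IsOpen U := Metric.isOpen_ball.inter (isOpen_lt continuous_const f.continuous)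
  have hUne : U.Nonempty := by
    refine ⟨z + (ε / (2 * ‖v‖)) • v, ?_, ?_⟩
    · rw [Metric.mem_ball, dist_eq_norm, add_sub_cancel_left, norm_smul, Real.norm_eq_abs,
        abs_of_pos (by positivity)]
      have h2v : ‖v‖ * (ε / (2 * ‖v‖)) = ε / 2 := by
        field_simp
      rw [mul_comm, h2v]
      linarith
    · show f z < f (z + (ε / (2 * ‖v‖)) • v)
      rw [map_add, f.map_smul, smul_eq_mul]
      nlinarith [div_pos hε (by positivity : (0:ℝ) < 2 * ‖v‖), hfv]
  have hUK : U ⊆ K := fun y hy => hball hy.1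
  have hdisj : Disjoint H U := by
    rw [Set.disjoint_left]
    intro y hyH hyU
    exact absurd (hf y hyH) (not_lt.2 (le_of_lt hyU.2))
  have hsum : volume H + volume U ≤ volume K := by
    rw [← measure_union hdisj hUopen.measurableSet]
    exact measure_mono (Set.union_subset hHK hUK)
  have hHfin : volume H ≠ ⊤ := by
    exact ne_of_lt (lt_of_le_of_lt (measure_mono hHK) hKbdd.measure_lt_top)
  calc volume H < volume H + volume U :=
        ENNReal.lt_add_right hHfin (ne_of_gt (hUopen.measure_pos volume hUne))
  _ ≤ volume K := hsum

lemma openSquare_facts : IsOpen openSquare ∧ Convex ℝ openSquare ∧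
    (0 : Fin 2 → ℝ) ∈ openSquare := by
  have heq : openSquare = Set.univ.pi fun _ => Set.Ioo (-1:ℝ) 1 := by
    ext x
    simp [openSquare, Set.mem_pi, abs_lt, Fin.forall_fin_two, and_comm]
  refine ⟨?_, ?_, ?_⟩
  · rw [heq]; exact isOpen_set_pi Set.finite_univ (fun i _ => isOpen_Ioo)
  · rw [heq]; exact convex_pi (fun i _ => convex_Ioo _ _)
  · simp [openSquare]

/-- A parallelogram cannot be a proper subdomain of `K` realizing the same critical
determinant: if `H ⊊ K` is a parallelogram with `Δ(H) = V(H)/4`, then `Δ(H) < Δ(K)`. -/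
theorem parallelogram_proper_subdomain_smaller_critDet (H K : Set (Fin 2 → ℝ))
    (hKopen : IsOpen K) (hKbdd : Bornology.IsBounded K) (hKconv : Convex ℝ K)
    (hKsym : ∀ x ∈ K, -x ∈ K)
    (hHK : H ⊆ K) (hne : H ≠ K)
    (hpar : ∃ g : Matrix (Fin 2) (Fin 2) ℝ, g.det ≠ 0 ∧
      H = (fun x => g.mulVec x) '' openSquare)
    (hΔH : critDet2 H = (volume H).toReal / 4) :
    critDet2 H < critDet2 K := by
  obtain ⟨g, hg, hHg⟩ := hpar
  have hinv : Invertible g := g.invertibleOfIsUnitDet (isUnit_iff_ne_zero.2 hg)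
  have hmv : (fun x => g.mulVec x) = ⇑(g.toLinearEquiv' hinv) := by
    funext x; rw [toLinearEquiv'_eq_mulVec]
  obtain ⟨hsqopen, hsqconv, h0sq⟩ := openSquare_facts
  have hHopen : IsOpen H := by
    rw [hHg, hmv]
    have hcoe : ⇑(g.toLinearEquiv' hinv)
        = ⇑((g.toLinearEquiv' hinv).toContinuousLinearEquiv) := by
      ext x
      simp
    rw [hcoe]
    exact (g.toLinearEquiv' hinv).toContinuousLinearEquiv.toHomeomorph.isOpenMap _ hsqopen
  have hHconv : Convex ℝ H := by
    rw [hHg]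
    have h2 : (fun x => g.mulVec x) = ⇑(Matrix.toLin' g) := by
      funext x; rw [Matrix.toLin'_apply]
    rw [h2]
    exact hsqconv.linear_image _
  have h0H : (0 : Fin 2 → ℝ) ∈ H := by
    rw [hHg]; exact ⟨0, h0sq, Matrix.mulVec_zero g⟩
  have h0K : (0 : Fin 2 → ℝ) ∈ K := hHK h0H
  obtain ⟨g0, hg0, hadm0⟩ := exists_admissible K hKbdd h0K
  have hKfin : volume K ≠ ⊤ := hKbdd.measure_lt_top.ne
  have hvol : volume H < volume K :=
    volume_lt_volume H K hHopen hHconv ⟨0, h0H⟩ hKopen hKbdd hHK hne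
  have hSne : Set.Nonempty {d | ∃ g' : Matrix (Fin 2) (Fin 2) ℝ,
      g'.det ≠ 0 ∧ Admissible2 K g' ∧ d = |g'.det|} := ⟨|g0.det|, g0, hg0, hadm0, rfl⟩
  have hstep : (volume K).toReal / 4 ≤ critDet2 K := by
    unfold critDet2
    apply le_csInf hSne
    rintro d ⟨g', hg', hadm', rfl⟩
    have hmk := minkowski_bound K hKconv hKsym g' hg' hadm'
    have h4 : (ENNReal.ofReal |g'.det| * 4) = ENNReal.ofReal (|g'.det| * 4) := by
      rw [ENNReal.ofReal_mul (abs_nonneg _)]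
      norm_num
    rw [h4] at hmk
    have hle := ENNReal.toReal_mono ENNReal.ofReal_ne_top hmk
    rw [ENNReal.toReal_ofReal (by positivity)] at hle
    linarith
  have hmid : (volume H).toReal / 4 < (volume K).toReal / 4 := by
    have := ENNReal.toReal_strict_mono hKfin hvol
    linarith
  rw [hΔH]
  linarith
end
end

section
/- Let D be the open unit disc and let K ⊃ D be a convex symmetric domain whose boundary meets the unit circle in a closed set F ⊂ ∂D that is invariant under x ↦ -x. Then a D-critical lattice Λ is K-admissible if and only if all six points of Λ ∩ ∂D lie in F. -/
open MeasureTheory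

noncomputable section

namespace AuxHex

/-- lattice generated by two vectors -/
def lat (p q : Fin 2 → ℝ) : Set (Fin 2 → ℝ) :=
  {x | ∃ m n : ℤ, x = fun i => (m : ℝ) * p i + (n : ℝ) * q i}

lemma lattice2_eq_lat (g : Matrix (Fin 2) (Fin 2) ℝ) :
    lattice2 g = lat (fun i => g i 0) (fun i => g i 1) := by
  ext x
  constructor
  · rintro ⟨m, rfl⟩
    exact ⟨m 0, m 1, by
      funext i
      simp [Matrix.mulVec, dotProduct, Fin.sum_univ_two, mul_comm]⟩
  · rintro ⟨m, n, rfl⟩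
    exact ⟨![m, n], by
      funext i
      simp [Matrix.mulVec, dotProduct, Fin.sum_univ_two, mul_comm]⟩

lemma lat_change (u v : Fin 2 → ℝ) (α β γ δ : ℤ)
    (h : α*δ - β*γ = 1 ∨ α*δ - β*γ = -1) :
    lat u v = lat (fun i => (α:ℝ) * u i + (β:ℝ) * v i)
      (fun i => (γ:ℝ) * u i + (δ:ℝ) * v i) := by
  have he2 : (α*δ - β*γ) * (α*δ - β*γ) = 1 := by rcases h with h | h <;> rw [h] <;> norm_num
  ext x
  constructor
  · rintro ⟨m, n, rfl⟩
    refine ⟨(α*δ - β*γ) * (δ*m - γ*n), (α*δ - β*γ) * (α*n - β*m), ?_⟩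
    funext i
    have hm : ((α*δ - β*γ) * (δ*m - γ*n)) * α + ((α*δ - β*γ) * (α*n - β*m)) * γ = m := by
      linear_combination m * he2
    have hn : ((α*δ - β*γ) * (δ*m - γ*n)) * β + ((α*δ - β*γ) * (α*n - β*m)) * δ = n := by
      linear_combination n * he2
    have hmR : (((α:ℝ)*δ - β*γ) * ((δ:ℝ)*m - γ*n)) * α + (((α:ℝ)*δ - β*γ) * ((α:ℝ)*n - β*m)) * γ = (m : ℝ) := by
      exact_mod_cast hm
    have hnR : (((α:ℝ)*δ - β*γ) * ((δ:ℝ)*m - γ*n)) * β + (((α:ℝ)*δ - β*γ) * ((α:ℝ)*n - β*m)) * δ = (n : ℝ) := by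
      exact_mod_cast hn
    push_cast
    linear_combination (-(u i)) * hmR + (-(v i)) * hnR
  · rintro ⟨m, n, rfl⟩
    refine ⟨m*α + n*γ, m*β + n*δ, ?_⟩
    funext i
    push_cast
    ring

lemma indep {u v : Fin 2 → ℝ} (hd : u 0 * v 1 - u 1 * v 0 ≠ 0) {m n : ℝ}
    (h0 : m * u 0 + n * v 0 = 0) (h1 : m * u 1 + n * v 1 = 0) : m = 0 ∧ n = 0 := by
  have hm : m * (u 0 * v 1 - u 1 * v 0) = 0 := by linear_combination v 1 * h0 - v 0 * h1
  have hn : n * (u 0 * v 1 - u 1 * v 0) = 0 := by linear_combination u 0 * h1 - u 1 * h0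
  exact ⟨(mul_eq_zero.mp hm).resolve_right hd, (mul_eq_zero.mp hn).resolve_right hd⟩

lemma isOpen_unitDisc : IsOpen unitDisc := by
  have hf : Continuous fun x : Fin 2 → ℝ => x 0 ^ 2 + x 1 ^ 2 :=
    ((continuous_apply 0).pow 2).add ((continuous_apply 1).pow 2)
  exact isOpen_lt hf continuous_const

lemma frontier_unitDisc : frontier unitDisc = {x | x 0 ^ 2 + x 1 ^ 2 = 1} := by
  have hf : Continuous fun x : Fin 2 → ℝ => x 0 ^ 2 + x 1 ^ 2 :=
    ((continuous_apply 0).pow 2).add ((continuous_apply 1).pow 2)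
  have hcl : closure unitDisc ⊆ {x | x 0 ^ 2 + x 1 ^ 2 ≤ 1} := by
    apply closure_minimal ?_ (isClosed_le hf continuous_const)
    intro x hx
    exact le_of_lt (show x 0 ^ 2 + x 1 ^ 2 < 1 from hx)
  have hsub : {x : Fin 2 → ℝ | x 0 ^ 2 + x 1 ^ 2 = 1} ⊆ closure unitDisc := by
    intro x hx
    have hx1 : x 0 ^ 2 + x 1 ^ 2 = 1 := hx
    have htend : Filter.Tendsto (fun k : ℕ => (1 - 1/((k:ℝ)+1)) • x) Filter.atTop (nhds x) := by
      have h1 : Filter.Tendsto (fun k : ℕ => (1 - 1/((k:ℝ)+1))) Filter.atTop (nhds 1) := by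
        have : Filter.Tendsto (fun n : ℕ => 1 / ((n : ℝ) + 1)) Filter.atTop (nhds 0) :=
          tendsto_one_div_add_atTop_nhds_zero_nat
        have h2 := Filter.Tendsto.const_sub (1:ℝ) this
        simpa using h2
      have h3 := Filter.Tendsto.smul_const h1 x
      simpa using h3
    refine mem_closure_of_tendsto htend (Filter.Eventually.of_forall fun k => ?_)
    have hk0 : (0:ℝ) ≤ (k:ℝ) := Nat.cast_nonneg k
    have hpos : 0 < 1/((k:ℝ)+1) := by positivity
    have hle : 1/((k:ℝ)+1) ≤ 1 := by
      rw [div_le_one (by linarith)]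
      linarith
    show ((1 - 1/((k:ℝ)+1)) • x) 0 ^ 2 + ((1 - 1/((k:ℝ)+1)) • x) 1 ^ 2 < 1
    simp only [Pi.smul_apply, smul_eq_mul]
    have hid : ((1 - 1/((k:ℝ)+1)) * x 0)^2 + ((1 - 1/((k:ℝ)+1)) * x 1)^2
        = (1 - 1/((k:ℝ)+1))^2 * (x 0^2 + x 1^2) := by ring
    rw [hid, hx1, mul_one]
    nlinarith
  rw [isOpen_unitDisc.frontier_eq]
  apply Set.eq_of_subset_of_subset
  · rintro x ⟨hc, hns⟩
    have h1 : x 0 ^ 2 + x 1 ^ 2 ≤ 1 := hcl hc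
    have h2 : ¬ (x 0 ^ 2 + x 1 ^ 2 < 1) := hns
    exact le_antisymm h1 (not_lt.mp h2)
  · intro x hx
    exact ⟨hsub hx, by simp only [unitDisc, Set.mem_setOf_eq]; rw [Set.mem_setOf_eq] at hx; linarith [hx.le]⟩

lemma sq_ne_two (m n : ℤ) : m^2 - m*n + n^2 ≠ 2 := by
  intro h
  have e1 : (2*m - n)^2 + 3*n^2 = 8 := by linear_combination 4*h
  have e2 : (2*n - m)^2 + 3*m^2 = 8 := by linear_combination 4*h
  have hn1 : -1 ≤ n := by nlinarith [sq_nonneg (2*m - n)]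
  have hn2 : n ≤ 1 := by nlinarith [sq_nonneg (2*m - n)]
  have hm1 : -1 ≤ m := by nlinarith [sq_nonneg (2*n - m)]
  have hm2 : m ≤ 1 := by nlinarith [sq_nonneg (2*n - m)]
  interval_cases m <;> interval_cases n <;> omega

lemma sq_zero (m n : ℤ) (h : m^2 - m*n + n^2 = 0) : m = 0 ∧ n = 0 := by
  have e1 : (2*m - n)^2 + 3*n^2 = 0 := by linear_combination 4*h
  have hn : n = 0 := by nlinarith [sq_nonneg (2*m - n), sq_nonneg n]
  subst hn
  constructor
  · nlinarith [sq_nonneg m]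
  · rfl

lemma max3 (m n : ℤ) (h : 3 ≤ m^2 - m*n + n^2) :
    3 ≤ 2*m - n ∨ 2*m - n ≤ -3 ∨ 3 ≤ 2*n - m ∨ 2*n - m ≤ -3 ∨ 3 ≤ m + n ∨ m + n ≤ -3 := by
  by_contra hc
  push_neg at hc
  obtain ⟨h1, h2, h3, h4, h5, h6⟩ := hc
  have hA : (2*m - n)^2 ≤ 4 := by nlinarith
  have hB : (2*n - m)^2 ≤ 4 := by nlinarith
  have hC : (m + n)^2 ≤ 4 := by nlinarith
  have key : (2*m - n)^2 + (2*n - m)^2 + (m + n)^2 = 6*(m^2 - m*n + n^2) := by ring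
  linarith



def Qv (u0 u1 v0 v1 : ℝ) (m n : ℤ) : ℝ :=
  ((m:ℝ)*u0+(n:ℝ)*v0)^2 + ((m:ℝ)*u1+(n:ℝ)*v1)^2

lemma le_self_sq_int (k : ℤ) : k ≤ k^2 := by
  have h : 2*k-1 ≤ -1 ∨ 1 ≤ 2*k-1 := by omega
  rcases h with h | h <;> nlinarith

set_option maxHeartbeats 2000000 in
lemma scalar_reduce (u0 u1 v0 v1 : ℝ)
    (hdne : u0*v1 - u1*v0 ≠ 0)
    (hd2 : (u0*v1 - u1*v0)^2 = 3/4)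
    (hadm : ∀ m n : ℤ, ¬(m = 0 ∧ n = 0) →
      1 ≤ ((m:ℝ)*u0+(n:ℝ)*v0)^2 + ((m:ℝ)*u1+(n:ℝ)*v1)^2) :
    ∃ α β γ δ : ℤ, (α*δ - β*γ = 1 ∨ α*δ - β*γ = -1) ∧
      ((α:ℝ)*u0+(β:ℝ)*v0)^2 + ((α:ℝ)*u1+(β:ℝ)*v1)^2 = 1 ∧
      ((γ:ℝ)*u0+(δ:ℝ)*v0)^2 + ((γ:ℝ)*u1+(δ:ℝ)*v1)^2 = 1 ∧
      ((α:ℝ)*u0+(β:ℝ)*v0)*((γ:ℝ)*u0+(δ:ℝ)*v0)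
        + ((α:ℝ)*u1+(β:ℝ)*v1)*((γ:ℝ)*u1+(δ:ℝ)*v1) = -(1/2) := by
  classical
  have hadmQ : ∀ m n : ℤ, ¬(m = 0 ∧ n = 0) → 1 ≤ Qv u0 u1 v0 v1 m n := by
    intro m n h; unfold Qv; exact hadm m n h
  have hQ10 : Qv u0 u1 v0 v1 1 0 = u0^2 + u1^2 := by unfold Qv; push_cast; ring
  have hQ01 : Qv u0 u1 v0 v1 0 1 = v0^2 + v1^2 := by unfold Qv; push_cast; ring
  have ha1 : 1 ≤ u0^2 + u1^2 := by
    have h := hadmQ 1 0 (by simp); rw [hQ10] at h; exact h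
  have hb1 : 1 ≤ v0^2 + v1^2 := by
    have h := hadmQ 0 1 (by simp); rw [hQ01] at h; exact h
  have hsqle : ∀ k B : ℤ, (k:ℝ)^2 ≤ (B:ℝ) → -B ≤ k ∧ k ≤ B := by
    intro k B h
    have h2 : k^2 ≤ B := by exact_mod_cast h
    have h3 := le_self_sq_int k
    have h4 := le_self_sq_int (-k)
    constructor <;> nlinarith
  set M : ℤ := max 1 ⌈(4/3)*((u0^2+u1^2)*(v0^2+v1^2)) + (4/3)*(u0^2+u1^2)^2⌉ with hM
  have hM1 : 1 ≤ M := le_max_left 1 _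
  have hMreal : (4/3)*((u0^2+u1^2)*(v0^2+v1^2)) + (4/3)*(u0^2+u1^2)^2 ≤ (M:ℝ) := by
    have h1 := Int.le_ceil ((4/3)*((u0^2+u1^2)*(v0^2+v1^2)) + (4/3)*(u0^2+u1^2)^2)
    have h2 : (⌈(4/3)*((u0^2+u1^2)*(v0^2+v1^2)) + (4/3)*(u0^2+u1^2)^2⌉ : ℤ) ≤ M :=
      le_max_right _ _
    calc (4/3)*((u0^2+u1^2)*(v0^2+v1^2)) + (4/3)*(u0^2+u1^2)^2
        ≤ ((⌈(4/3)*((u0^2+u1^2)*(v0^2+v1^2)) + (4/3)*(u0^2+u1^2)^2⌉ : ℤ) : ℝ) := h1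
      _ ≤ (M : ℝ) := by exact_mod_cast h2
  have hbox : ∀ m n : ℤ, Qv u0 u1 v0 v1 m n ≤ u0^2+u1^2 →
      (m:ℝ)^2 ≤ (M:ℝ) ∧ (n:ℝ)^2 ≤ (M:ℝ) := by
    intro m n hq
    have key1 : (u0^2+u1^2) * Qv u0 u1 v0 v1 m n
        = ((u0^2+u1^2)*(m:ℝ) + (u0*v0+u1*v1)*(n:ℝ))^2 + (u0*v1-u1*v0)^2*(n:ℝ)^2 := by
      unfold Qv; push_cast; ring
    have key2 : (v0^2+v1^2) * Qv u0 u1 v0 v1 m n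
        = ((u0*v0+u1*v1)*(m:ℝ) + (v0^2+v1^2)*(n:ℝ))^2 + (u0*v1-u1*v0)^2*(m:ℝ)^2 := by
      unfold Qv; push_cast; ring
    rw [hd2] at key1 key2
    constructor
    · have hbq : (v0^2+v1^2) * Qv u0 u1 v0 v1 m n ≤ (u0^2+u1^2) * (v0^2+v1^2) := by
        calc (v0^2+v1^2) * Qv u0 u1 v0 v1 m n ≤ (v0^2+v1^2) * (u0^2+u1^2) :=
              mul_le_mul_of_nonneg_left hq (by positivity)
          _ = (u0^2+u1^2) * (v0^2+v1^2) := by ring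
      have h34 : (3/4) * (m:ℝ)^2 ≤ (v0^2+v1^2) * Qv u0 u1 v0 v1 m n := by
        linarith [key2, sq_nonneg ((u0*v0+u1*v1)*(m:ℝ) + (v0^2+v1^2)*(n:ℝ))]
      linarith [hMreal, sq_nonneg (u0^2+u1^2)]
    · have haq : (u0^2+u1^2) * Qv u0 u1 v0 v1 m n ≤ (u0^2+u1^2)^2 := by
        calc (u0^2+u1^2) * Qv u0 u1 v0 v1 m n ≤ (u0^2+u1^2) * (u0^2+u1^2) :=
              mul_le_mul_of_nonneg_left hq (by positivity)
          _ = (u0^2+u1^2)^2 := by ring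
      have h34 : (3/4) * (n:ℝ)^2 ≤ (u0^2+u1^2) * Qv u0 u1 v0 v1 m n := by
        linarith [key1, sq_nonneg ((u0^2+u1^2)*(m:ℝ) + (u0*v0+u1*v1)*(n:ℝ))]
      linarith [hMreal, mul_nonneg (by positivity : (0:ℝ) ≤ u0^2+u1^2) (by positivity : (0:ℝ) ≤ v0^2+v1^2)]
  set S : Finset (ℤ × ℤ) := (Finset.Icc (-M) M ×ˢ Finset.Icc (-M) M).erase (0,0) with hS
  have hS10 : ((1,0) : ℤ × ℤ) ∈ S := by
    rw [hS, Finset.mem_erase]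
    constructor
    · simp
    · rw [Finset.mem_product]
      constructor <;> rw [Finset.mem_Icc] <;> omega
  have hne : S.Nonempty := ⟨(1,0), hS10⟩
  obtain ⟨r1, hr1S, hAeq⟩ := Finset.exists_mem_eq_inf' hne (fun r => Qv u0 u1 v0 v1 r.1 r.2)
  obtain ⟨m1, n1⟩ := r1
  set A : ℝ := S.inf' hne (fun r => Qv u0 u1 v0 v1 r.1 r.2) with hA
  have hAval : A = Qv u0 u1 v0 v1 m1 n1 := hAeq
  have hmn1 : ¬(m1 = 0 ∧ n1 = 0) := by
    have h := (Finset.mem_erase.mp hr1S).1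
    rintro ⟨rfl, rfl⟩
    exact h rfl
  have hA_le_a : A ≤ u0^2+u1^2 := by
    have h := Finset.inf'_le (s := S) (fun r => Qv u0 u1 v0 v1 r.1 r.2) hS10
    rw [hA]
    calc S.inf' hne (fun r => Qv u0 u1 v0 v1 r.1 r.2) ≤ Qv u0 u1 v0 v1 1 0 := h
      _ = u0^2+u1^2 := hQ10
  have hminS : ∀ m n : ℤ, ¬(m = 0 ∧ n = 0) → A ≤ Qv u0 u1 v0 v1 m n := by
    intro m n hmn
    by_cases hc : Qv u0 u1 v0 v1 m n ≤ u0^2+u1^2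
    · obtain ⟨hm2, hn2⟩ := hbox m n hc
      obtain ⟨hm3, hm4⟩ := hsqle m M hm2
      obtain ⟨hn3, hn4⟩ := hsqle n M hn2
      have hmem : (m,n) ∈ S := by
        rw [hS, Finset.mem_erase]
        refine ⟨?_, ?_⟩
        · intro h
          rw [Prod.mk.injEq] at h
          exact hmn h
        · rw [Finset.mem_product]
          constructor <;> rw [Finset.mem_Icc] <;> exact ⟨by assumption, by assumption⟩
      have h := Finset.inf'_le (s := S) (fun r => Qv u0 u1 v0 v1 r.1 r.2) hmem
      rw [hA]; exact h
    · push_neg at hc; linarith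
  have hA1 : 1 ≤ A := by rw [hAval]; exact hadmQ m1 n1 hmn1
  have hApos : (0:ℝ) < A := by linarith
  -- primitivity of the minimal vector
  set dg : ℕ := Int.gcd m1 n1 with hdg
  obtain ⟨m', hm'⟩ : ((dg:ℤ)) ∣ m1 := by rw [hdg]; exact Int.gcd_dvd_left m1 n1
  obtain ⟨n', hn'⟩ : ((dg:ℤ)) ∣ n1 := by rw [hdg]; exact Int.gcd_dvd_right m1 n1
  have hmn' : ¬(m' = 0 ∧ n' = 0) := by
    rintro ⟨rfl, rfl⟩
    apply hmn1
    constructor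
    · rw [hm', mul_zero]
    · rw [hn', mul_zero]
  have hQd : Qv u0 u1 v0 v1 m1 n1 = ((dg:ℝ))^2 * Qv u0 u1 v0 v1 m' n' := by
    unfold Qv; rw [hm', hn']; push_cast; ring
  have hd1 : dg = 1 := by
    by_contra hne1
    have hdg0 : dg ≠ 0 := by
      rw [hdg]; intro h; exact hmn1 (Int.gcd_eq_zero_iff.mp h)
    have h2 : 2 ≤ dg := by omega
    have h2R : (2:ℝ) ≤ (dg:ℝ) := by exact_mod_cast h2
    have hge := hminS m' n' hmn'
    have h4 : (4:ℝ) ≤ (dg:ℝ)^2 := by nlinarith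
    have hprod : 4 * A ≤ (dg:ℝ)^2 * Qv u0 u1 v0 v1 m' n' :=
      mul_le_mul h4 hge (by linarith) (by positivity)
    linarith [hAval, hQd]
  -- Bezout coefficients
  set X : ℤ := Int.gcdA m1 n1 with hX
  set Y : ℤ := Int.gcdB m1 n1 with hY
  have hbez : m1 * X + n1 * Y = 1 := by
    have h := Int.gcd_eq_gcd_ab m1 n1
    rw [← hdg, hd1] at h
    rw [hX, hY]
    exact_mod_cast h.symm
  -- new basis p = (P0,P1), q0 = (R0,R1)
  set P0 : ℝ := (m1:ℝ)*u0 + (n1:ℝ)*v0 with hP0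
  set P1 : ℝ := (m1:ℝ)*u1 + (n1:ℝ)*v1 with hP1
  set R0 : ℝ := (-(Y:ℝ))*u0 + (X:ℝ)*v0 with hR0
  set R1 : ℝ := (-(Y:ℝ))*u1 + (X:ℝ)*v1 with hR1
  have hAPQ : A = P0^2 + P1^2 := by
    rw [hAval, hP0, hP1]; unfold Qv; ring
  have hbezR : (m1:ℝ) * (X:ℝ) + (n1:ℝ) * (Y:ℝ) = 1 := by exact_mod_cast hbez
  have hdetP : P0*R1 - P1*R0 = u0*v1 - u1*v0 := by
    rw [hP0, hP1, hR0, hR1]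
    linear_combination (u0*v1 - u1*v0) * hbezR
  set c1 : ℝ := P0*R0 + P1*R1 with hc1
  set k : ℤ := -⌊c1/A + 1/2⌋ with hk
  set c' : ℝ := c1 + (k:ℝ)*A with hc'
  have hc'bound : c'^2 ≤ A^2/4 := by
    have hf1 := Int.floor_le (c1/A + 1/2)
    have hf2 := Int.lt_floor_add_one (c1/A + 1/2)
    have hkr : (k:ℝ) = -((⌊c1/A + 1/2⌋:ℤ):ℝ) := by rw [hk]; push_cast; ring
    have hb1' : -(1/2) ≤ c1/A + (k:ℝ) := by rw [hkr]; linarith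
    have hb2' : c1/A + (k:ℝ) ≤ 1/2 := by rw [hkr]; linarith
    have hcc : c' = A * (c1/A + (k:ℝ)) := by
      rw [hc']; field_simp
    have ht2 : (c1/A + (k:ℝ))^2 ≤ 1/4 := by nlinarith
    have he : (A * (c1/A + (k:ℝ)))^2 = A^2 * (c1/A + (k:ℝ))^2 := by ring
    have hmul : A^2 * (c1/A + (k:ℝ))^2 ≤ A^2 * (1/4) :=
      mul_le_mul_of_nonneg_left ht2 (sq_nonneg A)
    rw [hcc, he]
    linarith
  set T0 : ℝ := (k:ℝ)*P0 + R0 with hT0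
  set T1 : ℝ := (k:ℝ)*P1 + R1 with hT1
  set b' : ℝ := T0^2 + T1^2 with hb'
  have hkey : A * b' = c'^2 + 3/4 := by
    rw [hb', hT0, hT1, hc', hc1, hAPQ]
    linear_combination (P0*R1 - P1*R0 + (u0*v1 - u1*v0)) * hdetP + hd2
  have hTint0 : T0 = ((k*m1 - Y : ℤ):ℝ)*u0 + ((k*n1 + X : ℤ):ℝ)*v0 := by
    rw [hT0, hP0, hR0]; push_cast; ring
  have hTint1 : T1 = ((k*m1 - Y : ℤ):ℝ)*u1 + ((k*n1 + X : ℤ):ℝ)*v1 := by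
    rw [hT1, hP1, hR1]; push_cast; ring
  have hbQ : b' = Qv u0 u1 v0 v1 (k*m1 - Y) (k*n1 + X) := by
    rw [hb', hTint0, hTint1]; unfold Qv; ring
  have hTnz : ¬(k*m1 - Y = 0 ∧ k*n1 + X = 0) := by
    rintro ⟨h1, h2⟩
    have hcontr : m1*(k*n1 + X) - n1*(k*m1 - Y) = 1 := by linear_combination hbez
    rw [h1, h2] at hcontr
    simp at hcontr
  have hb'A : A ≤ b' := by rw [hbQ]; exact hminS _ _ hTnz
  have hb'1 : 1 ≤ b' := by rw [hbQ]; exact hadmQ _ _ hTnz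
  clear_value b' T0 T1 c' k c1 R0 R1 P0 P1 A dg X Y
  have hA2le : A^2 ≤ 1 := by
    have h1 : A * A ≤ A * b' := mul_le_mul_of_nonneg_left hb'A (le_of_lt hApos)
    have h2 : A * A = A^2 := by ring
    linarith
  have hAeq1 : A = 1 := by
    have h1 : A * 1 ≤ A * A := mul_le_mul_of_nonneg_left hA1 (le_of_lt hApos)
    have h2 : A * A = A^2 := by ring
    have h3 : A * 1 = A := by ring
    linarith
  have hb'eq : b' = 1 := by
    rw [hAeq1] at hkey hc'bound
    have h1 : (1:ℝ)*b' = b' := by ring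
    have h2 : (1:ℝ)^2/4 = 1/4 := by norm_num
    linarith
  have hc'sq : c'^2 = 1/4 := by
    rw [hAeq1] at hkey
    rw [hb'eq] at hkey
    linarith
  have hPT : P0*T0 + P1*T1 = c' := by
    rw [hT0, hT1, hc', hc1, hAPQ]; ring
  have hPnorm : P0^2 + P1^2 = 1 := by rw [← hAPQ]; exact hAeq1
  have hTnorm : T0^2 + T1^2 = 1 := by rw [← hb']; exact hb'eq
  have hdetTot : m1*(k*n1+X) - n1*(k*m1-Y) = 1 := by linear_combination hbez
  have hc'pm : c' = 1/2 ∨ c' = -(1/2) := by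
    have h0 : (c' - 1/2)*(c' + 1/2) = 0 := by linear_combination hc'sq
    rcases mul_eq_zero.mp h0 with h | h
    · left; linarith
    · right; linarith
  rcases hc'pm with hcp | hcm
  · refine ⟨m1, n1, -(k*m1 - Y), -(k*n1 + X), Or.inr (by linear_combination (-1 : ℤ) * hdetTot), ?_, ?_, ?_⟩
    · rw [← hP0, ← hP1]; exact hPnorm
    · have e0 : ((-(k*m1 - Y) : ℤ):ℝ)*u0 + ((-(k*n1 + X) : ℤ):ℝ)*v0 = -T0 := by
        rw [hTint0]; push_cast; ring
      have e1 : ((-(k*m1 - Y) : ℤ):ℝ)*u1 + ((-(k*n1 + X) : ℤ):ℝ)*v1 = -T1 := by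
        rw [hTint1]; push_cast; ring
      rw [e0, e1]
      calc (-T0)^2 + (-T1)^2 = T0^2 + T1^2 := by ring
        _ = 1 := hTnorm
    · have e0 : ((-(k*m1 - Y) : ℤ):ℝ)*u0 + ((-(k*n1 + X) : ℤ):ℝ)*v0 = -T0 := by
        rw [hTint0]; push_cast; ring
      have e1 : ((-(k*m1 - Y) : ℤ):ℝ)*u1 + ((-(k*n1 + X) : ℤ):ℝ)*v1 = -T1 := by
        rw [hTint1]; push_cast; ring
      rw [← hP0, ← hP1, e0, e1]
      calc P0*(-T0) + P1*(-T1) = -(P0*T0 + P1*T1) := by ring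
        _ = -(1/2) := by rw [hPT, hcp]
  · refine ⟨m1, n1, k*m1 - Y, k*n1 + X, Or.inl (by linear_combination hdetTot), ?_, ?_, ?_⟩
    · rw [← hP0, ← hP1]; exact hPnorm
    · rw [← hTint0, ← hTint1]; exact hTnorm
    · rw [← hP0, ← hP1, ← hTint0, ← hTint1]
      rw [hPT]; exact hcm


lemma norm_ge_one {g : Matrix (Fin 2) (Fin 2) ℝ} (hadm : Admissible2 unitDisc g)
    {x : Fin 2 → ℝ} (hx : x ∈ lattice2 g) (hx0 : x ≠ 0) : 1 ≤ x 0^2 + x 1^2 := by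
  by_contra h
  push_neg at h
  have hm : x ∈ lattice2 g ∩ unitDisc := ⟨hx, h⟩
  rw [hadm] at hm
  exact hx0 hm

lemma exists_hex_basis (g : Matrix (Fin 2) (Fin 2) ℝ) (hdet : g.det ≠ 0)
    (hadm : Admissible2 unitDisc g) (hcov : |g.det| = Real.sqrt 3 / 2) :
    ∃ p q : Fin 2 → ℝ, lattice2 g = lat p q ∧ p 0^2 + p 1^2 = 1 ∧
      q 0^2 + q 1^2 = 1 ∧ p 0 * q 0 + p 1 * q 1 = -(1/2) := by
  have hL : lattice2 g = lat (fun i => g i 0) (fun i => g i 1) := lattice2_eq_lat g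
  have hdc : g.det = g 0 0 * g 1 1 - g 0 1 * g 1 0 := Matrix.det_fin_two g
  have hdne : g 0 0 * g 1 1 - g 1 0 * g 0 1 ≠ 0 := by
    rw [hdc] at hdet
    intro h
    apply hdet
    linear_combination h
  have hd2 : (g 0 0 * g 1 1 - g 1 0 * g 0 1)^2 = 3/4 := by
    have h3 : (Real.sqrt 3)^2 = 3 := Real.sq_sqrt (by norm_num)
    have hD : g.det^2 = 3/4 := by
      rw [← sq_abs, hcov, div_pow, h3]; norm_num
    rw [hdc] at hD
    linear_combination hD
  have hadmS : ∀ m n : ℤ, ¬(m = 0 ∧ n = 0) →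
      1 ≤ ((m:ℝ)*(g 0 0)+(n:ℝ)*(g 0 1))^2 + ((m:ℝ)*(g 1 0)+(n:ℝ)*(g 1 1))^2 := by
    intro m n hmn
    have hx : (fun i => (m:ℝ) * g i 0 + (n:ℝ) * g i 1) ∈ lattice2 g := by
      rw [hL]; exact ⟨m, n, rfl⟩
    have hx0 : (fun i => (m:ℝ) * g i 0 + (n:ℝ) * g i 1) ≠ 0 := by
      intro h
      have h0 : (m:ℝ) * g 0 0 + (n:ℝ) * g 0 1 = 0 := congrFun h 0
      have h1 : (m:ℝ) * g 1 0 + (n:ℝ) * g 1 1 = 0 := congrFun h 1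
      obtain ⟨hm0, hn0⟩ := indep (u := fun i => g i 0) (v := fun i => g i 1) hdne h0 h1
      exact hmn ⟨by exact_mod_cast hm0, by exact_mod_cast hn0⟩
    exact norm_ge_one hadm hx hx0
  obtain ⟨α, β, γ, δ, hdetc, h1, h2, h3⟩ :=
    scalar_reduce (g 0 0) (g 1 0) (g 0 1) (g 1 1) hdne hd2 hadmS
  refine ⟨fun i => (α:ℝ) * g i 0 + (β:ℝ) * g i 1,
          fun i => (γ:ℝ) * g i 0 + (δ:ℝ) * g i 1, ?_, h1, h2, h3⟩
  rw [hL]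
  exact lat_change _ _ α β γ δ hdetc

end AuxHex


open AuxHex in
/-- Let `K ⊇ D` meet the unit circle in the closed symmetric set `F`. A `D`-critical
lattice is `K`-admissible iff all its points on the unit circle lie in `F`. -/
theorem admissible_iff_boundary_points_in_F (K F : Set (Fin 2 → ℝ))
    (hopen : IsOpen K) (hbdd : Bornology.IsBounded K) (hconv : Convex ℝ K)
    (hsym : ∀ x ∈ K, -x ∈ K) (hDK : unitDisc ⊆ K)
    (hF : F = frontier K ∩ frontier unitDisc)
    (hFclosed : IsClosed F) (hFsym : ∀ x ∈ F, -x ∈ F)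
    (g : Matrix (Fin 2) (Fin 2) ℝ) (hdet : g.det ≠ 0)
    (hadm : Admissible2 unitDisc g) (hcov : |g.det| = Real.sqrt 3 / 2) :
    Admissible2 K g ↔ lattice2 g ∩ frontier unitDisc ⊆ F := by
  have hfr := frontier_unitDisc
  constructor
  · intro hKadm x hx
    obtain ⟨hxl, hxf⟩ := hx
    rw [hF]
    refine ⟨?_, hxf⟩
    rw [hopen.frontier_eq]
    refine ⟨closure_mono hDK (frontier_subset_closure hxf), ?_⟩
    intro hxK
    have hm : x ∈ lattice2 g ∩ K := ⟨hxl, hxK⟩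
    rw [hKadm] at hm
    have hx0 : x = 0 := hm
    rw [hfr, hx0] at hxf
    have : (0 : Fin 2 → ℝ) 0 ^ 2 + (0 : Fin 2 → ℝ) 1 ^ 2 = 1 := hxf
    norm_num at this
  · intro hsub
    obtain ⟨p, q, hlat, hp, hq, hpq⟩ := exists_hex_basis g hdet hadm hcov
    unfold Admissible2
    apply Set.eq_of_subset_of_subset
    · rintro x ⟨hxl, hxK⟩
      rw [Set.mem_singleton_iff]
      by_contra hx0
      have hxl2 : x ∈ lat p q := by rw [← hlat]; exact hxl
      obtain ⟨m, n, hxf⟩ := hxl2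
      have hxnorm : x 0^2 + x 1^2 = ((m^2 - m*n + n^2 : ℤ):ℝ) := by
        simp only [hxf]
        push_cast
        linear_combination ((m:ℝ)^2)*hp + ((n:ℝ)^2)*hq + (2*(m:ℝ)*(n:ℝ))*hpq
      obtain ⟨N, hNdef⟩ : ∃ N : ℤ, N = m^2 - m*n + n^2 := ⟨_, rfl⟩
      have hN0 : N ≠ 0 := by
        intro h
        obtain ⟨rfl, rfl⟩ := sq_zero m n (by omega)
        apply hx0
        rw [hxf]
        funext i
        norm_num
      have hN2 : N ≠ 2 := by
        intro h
        exact sq_ne_two m n (by omega)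
      have hNpos : 0 ≤ N := by
        rw [hNdef]
        nlinarith [sq_nonneg (2*m-n), sq_nonneg n]
      rcases (by omega : N = 1 ∨ 3 ≤ N) with hN1 | hN3
      · have hxfr : x ∈ frontier unitDisc := by
          rw [hfr]
          show x 0^2 + x 1^2 = 1
          rw [hxnorm, ← hNdef, hN1]
          norm_num
        have hxF : x ∈ F := hsub ⟨hxl, hxfr⟩
        rw [hF] at hxF
        have hxfk := hxF.1
        rw [hopen.frontier_eq] at hxfk
        exact hxfk.2 hxK
      · have hN3' : 3 ≤ m^2 - m*n + n^2 := by omega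
        have hR : (3:ℝ) ≤ x 0^2 + x 1^2 := by
          rw [hxnorm]
          exact_mod_cast (by omega : (3:ℤ) ≤ m^2 - m*n + n^2)
        have keyW : ∀ a b : ℤ,
            ((a:ℝ)*p 0 + (b:ℝ)*q 0)^2 + ((a:ℝ)*p 1 + (b:ℝ)*q 1)^2 = 1 →
            3/2 ≤ ((a:ℝ)*p 0 + (b:ℝ)*q 0) * x 0 + ((a:ℝ)*p 1 + (b:ℝ)*q 1) * x 1 →
            False := by
          intro a b hwn hwx
          set w : Fin 2 → ℝ := fun i => (a:ℝ)*p i + (b:ℝ)*q i with hw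
          have hwl : w ∈ lattice2 g := by rw [hlat]; exact ⟨a, b, hw⟩
          have hwn' : w 0^2 + w 1^2 = 1 := hwn
          have hwx' : 3/2 ≤ w 0 * x 0 + w 1 * x 1 := hwx
          have hwf : w ∈ frontier unitDisc := by rw [hfr]; exact hwn'
          have hwF : w ∈ F := hsub ⟨hwl, hwf⟩
          have hwfk : w ∈ frontier K := by rw [hF] at hwF; exact hwF.1
          have hwnotK : w ∉ K := by
            rw [hopen.frontier_eq] at hwfk
            exact hwfk.2
          clear_value w
          apply hwnotK
          -- geometric argument: w ∈ K
          have hRp : (0:ℝ) < x 0^2 + x 1^2 := lt_of_lt_of_le three_pos hR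
          have hRne : x 0^2 + x 1^2 ≠ 0 := ne_of_gt hRp
          set t : ℝ := 1/(x 0^2 + x 1^2) with ht
          have ht0 : 0 < t := by rw [ht]; positivity
          have ht13 : t ≤ 1/3 := by
            rw [ht]
            exact one_div_le_one_div_of_le three_pos hR
          have h1t : 0 < 1 - t := by linarith
          have ht2R : t^2*(x 0^2 + x 1^2) = t := by
            rw [ht]; field_simp
          clear_value t
          set z : Fin 2 → ℝ := fun i => (w i - t * x i)/(1 - t) with hz
          have hzD : z ∈ unitDisc := by
            show z 0^2 + z 1^2 < 1
            have hz0 : z 0 = (w 0 - t * x 0)/(1 - t) := by rw [hz]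
            have hz1 : z 1 = (w 1 - t * x 1)/(1 - t) := by rw [hz]
            rw [hz0, hz1, div_pow, div_pow, ← add_div,
              div_lt_one (pow_pos h1t 2)]
            nlinarith [hwn', ht2R, mul_le_mul_of_nonneg_left hwx' (le_of_lt ht0),
              mul_pos ht0 ht0]
          have hzK : z ∈ K := hDK hzD
          have hwc : w = t • x + (1-t) • z := by
            funext i
            have hzi : z i = (w i - t * x i)/(1 - t) := by rw [hz]
            simp only [Pi.add_apply, Pi.smul_apply, smul_eq_mul, hzi]
            field_simp
            ring
          rw [hwc]
          exact hconv hxK hzK (le_of_lt ht0) (le_of_lt h1t) (by ring)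
        rcases max3 m n hN3' with h | h | h | h | h | h
        · refine keyW 1 0 (by push_cast; linear_combination hp) ?_
          have hcast : (3:ℝ) ≤ 2*(m:ℝ) - (n:ℝ) := by exact_mod_cast h
          have e : (((1:ℤ):ℝ)*p 0 + ((0:ℤ):ℝ)*q 0) * x 0
              + (((1:ℤ):ℝ)*p 1 + ((0:ℤ):ℝ)*q 1) * x 1 = (m:ℝ) - (n:ℝ)/2 := by
            simp only [hxf]
            push_cast
            linear_combination (m:ℝ)*hp + (n:ℝ)*hpq
          rw [e]
          linarith
        · refine keyW (-1) 0 (by push_cast; linear_combination hp) ?_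
          have hcast : 2*(m:ℝ) - (n:ℝ) ≤ -3 := by exact_mod_cast h
          have e : ((((-1):ℤ):ℝ)*p 0 + ((0:ℤ):ℝ)*q 0) * x 0
              + ((((-1):ℤ):ℝ)*p 1 + ((0:ℤ):ℝ)*q 1) * x 1 = (n:ℝ)/2 - (m:ℝ) := by
            simp only [hxf]
            push_cast
            linear_combination (-(m:ℝ))*hp + (-(n:ℝ))*hpq
          rw [e]
          linarith
        · refine keyW 0 1 (by push_cast; linear_combination hq) ?_
          have hcast : (3:ℝ) ≤ 2*(n:ℝ) - (m:ℝ) := by exact_mod_cast h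
          have e : (((0:ℤ):ℝ)*p 0 + ((1:ℤ):ℝ)*q 0) * x 0
              + (((0:ℤ):ℝ)*p 1 + ((1:ℤ):ℝ)*q 1) * x 1 = (n:ℝ) - (m:ℝ)/2 := by
            simp only [hxf]
            push_cast
            linear_combination (n:ℝ)*hq + (m:ℝ)*hpq
          rw [e]
          linarith
        · refine keyW 0 (-1) (by push_cast; linear_combination hq) ?_
          have hcast : 2*(n:ℝ) - (m:ℝ) ≤ -3 := by exact_mod_cast h
          have e : (((0:ℤ):ℝ)*p 0 + (((-1):ℤ):ℝ)*q 0) * x 0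
              + (((0:ℤ):ℝ)*p 1 + (((-1):ℤ):ℝ)*q 1) * x 1 = (m:ℝ)/2 - (n:ℝ) := by
            simp only [hxf]
            push_cast
            linear_combination (-(n:ℝ))*hq + (-(m:ℝ))*hpq
          rw [e]
          linarith
        · refine keyW 1 1 (by push_cast; linear_combination hp + hq + 2*hpq) ?_
          have hcast : (3:ℝ) ≤ (m:ℝ) + (n:ℝ) := by exact_mod_cast h
          have e : (((1:ℤ):ℝ)*p 0 + ((1:ℤ):ℝ)*q 0) * x 0
              + (((1:ℤ):ℝ)*p 1 + ((1:ℤ):ℝ)*q 1) * x 1 = ((m:ℝ) + (n:ℝ))/2 := by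
            simp only [hxf]
            push_cast
            linear_combination (m:ℝ)*hp + (n:ℝ)*hq + ((m:ℝ)+(n:ℝ))*hpq
          rw [e]
          linarith
        · refine keyW (-1) (-1) (by push_cast; linear_combination hp + hq + 2*hpq) ?_
          have hcast : (m:ℝ) + (n:ℝ) ≤ -3 := by exact_mod_cast h
          have e : ((((-1):ℤ):ℝ)*p 0 + (((-1):ℤ):ℝ)*q 0) * x 0
              + ((((-1):ℤ):ℝ)*p 1 + (((-1):ℤ):ℝ)*q 1) * x 1 = -(((m:ℝ) + (n:ℝ))/2) := by
            simp only [hxf]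
            push_cast
            linear_combination (-(m:ℝ))*hp + (-(n:ℝ))*hq + (-((m:ℝ)+(n:ℝ)))*hpq
          rw [e]
          linarith
    · rintro x hx
      rw [Set.mem_singleton_iff] at hx
      subst hx
      refine ⟨⟨0, ?_⟩, hDK ?_⟩
      · funext i
        simp [Matrix.mulVec, dotProduct]
      · show (0:Fin 2 → ℝ) 0^2 + (0:Fin 2 → ℝ) 1^2 < 1
        norm_num
end
end
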